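/- arXiv:1409.6879 — 8 statements merged into one kernel-verified Lean document; each statement's English description precedes it below -/
import Mathlib

section
/- Let (P_1,…,P_k) be a set family tuple with each P_j of shape (m^{n_j}) and with defined type λ. Then there exists a closed set family tuple (P'_1,…,P'_k) with each P'_j of shape (m^{n_j}) whose type μ is defined and satisfies μ ⊴ λ; moreover, if (P_1,…,P_k) is not itself closed then μ ⊲ λ. -/
/-- The multiplicity of `i` in a set family `P`: the number of sets in `P` containing `i`. -/
def famMult (P : Finset (Finset ℕ)) (i : ℕ) : ℕ := (P.filter fun S => i ∈ S).card

/-- `P` is a set family of shape `(m^n)`: a collection of `n` distinct `m`-subsets of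
the positive integers. -/
def IsSetFamily (m n : ℕ) (P : Finset (Finset ℕ)) : Prop :=
  P.card = n ∧ ∀ S ∈ P, S.card = m ∧ ∀ x ∈ S, 1 ≤ x

/-- `B` majorizes `A` (written `A ⪯ B`): the `r`-th smallest element of `A` is at most
the `r`-th smallest element of `B` (the sets in question have the same cardinality). -/
def SetMaj (A B : Finset ℕ) : Prop :=
  ∀ r : ℕ, (A.sort (· ≤ ·)).getD r 0 ≤ (B.sort (· ≤ ·)).getD r 0

/-- A set family (of `m`-subsets) is closed if it is downward closed under majorization. -/
def ClosedFam (m : ℕ) (P : Finset (Finset ℕ)) : Prop :=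
  ∀ B ∈ P, ∀ A : Finset ℕ, A.card = m → (∀ x ∈ A, 1 ≤ x) → SetMaj A B → A ∈ P

/-- The type of a family (or tuple) whose multiplicity function is `f` is defined exactly
when `f` is weakly decreasing on the positive integers; then `f` is the conjugate `λ'`
of the type `λ`. -/
def TypeDefined (f : ℕ → ℕ) : Prop := ∀ i j : ℕ, 1 ≤ i → i ≤ j → f j ≤ f i

/-- The sum of the first `j` parts of the partition `λ` whose conjugate is `f`:
`λ_1 + ⋯ + λ_j = Σ_x min (λ'_x) j`. -/
noncomputable def partSum (f : ℕ → ℕ) (j : ℕ) : ℕ := ∑ᶠ x, min (f x) j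

/-- Dominance order: the partition with conjugate `g` is dominated (`⊴`) by the partition
with conjugate `f`. -/
def ConjDom (g f : ℕ → ℕ) : Prop := ∀ j : ℕ, partSum g j ≤ partSum f j

/-- Strict dominance `⊲` of the partition with conjugate `g` by the one with conjugate `f`. -/
def ConjStrictDom (g f : ℕ → ℕ) : Prop := ConjDom g f ∧ ∃ i : ℕ, 1 ≤ i ∧ g i ≠ f i

/-- The total multiplicity of `i` over a tuple of set families. -/
def tupMult {k : ℕ} (P : Fin k → Finset (Finset ℕ)) (i : ℕ) : ℕ := ∑ j, famMult (P j) i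

def mvSet (y : ℕ) (B : Finset ℕ) : Finset ℕ := insert y (B.erase (y+1))

lemma mem_mvSet {y : ℕ} {B : Finset ℕ} (i : ℕ) :
    i ∈ mvSet y B ↔ i = y ∨ (i ∈ B ∧ i ≠ y + 1) := by
  simp only [mvSet, Finset.mem_insert, Finset.mem_erase]; tauto

lemma mvSet_card {y : ℕ} {B : Finset ℕ} (h1 : y + 1 ∈ B) (h2 : y ∉ B) :
    (mvSet y B).card = B.card := by
  have h3 : y ∉ B.erase (y+1) := fun h => h2 (Finset.mem_of_mem_erase h)
  rw [mvSet, Finset.card_insert_of_notMem h3, Finset.card_erase_of_mem h1]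
  have : 1 ≤ B.card := Finset.card_pos.2 ⟨y+1, h1⟩
  omega

lemma mvSet_sum {y : ℕ} {B : Finset ℕ} (h1 : y + 1 ∈ B) (h2 : y ∉ B) :
    (mvSet y B).sum id + 1 = B.sum id := by
  have h3 : y ∉ B.erase (y+1) := fun h => h2 (Finset.mem_of_mem_erase h)
  rw [mvSet, Finset.sum_insert h3]
  have := Finset.sum_erase_add B id h1
  simp only [id] at *
  omega

lemma not_mem_mvSet {y : ℕ} {B : Finset ℕ} : y + 1 ∉ mvSet y B := by
  rw [mem_mvSet]; omega

lemma mem_mvSet_self {y : ℕ} {B : Finset ℕ} : y ∈ mvSet y B := by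
  rw [mem_mvSet]; left; rfl

lemma mvSet_inv {y : ℕ} {B : Finset ℕ} (h1 : y + 1 ∈ B) (h2 : y ∉ B) :
    insert (y+1) ((mvSet y B).erase y) = B := by
  ext z
  simp only [Finset.mem_insert, Finset.mem_erase, mem_mvSet]
  constructor
  · rintro (rfl | ⟨hz, (rfl | ⟨hzB, _⟩)⟩) <;> first | exact h1 | exact hzB | omega
  · intro hz
    by_cases hz1 : z = y + 1
    · exact Or.inl hz1
    · right; refine ⟨fun h => h2 (h ▸ hz), Or.inr ⟨hz, hz1⟩⟩

/-- The moving condition for the compression operator. -/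
def mvCond (y : ℕ) (Q : Finset (Finset ℕ)) (B : Finset ℕ) : Prop :=
  y + 1 ∈ B ∧ y ∉ B ∧ mvSet y B ∉ Q

instance (y Q B) : Decidable (mvCond y Q B) := by unfold mvCond; infer_instance

def mvFun (y : ℕ) (Q : Finset (Finset ℕ)) (B : Finset ℕ) : Finset ℕ :=
  if mvCond y Q B then mvSet y B else B

/-- Compression of the family `Q` at the pair `(y, y+1)`. -/
def compr (y : ℕ) (Q : Finset (Finset ℕ)) : Finset (Finset ℕ) := Q.image (mvFun y Q)

lemma mvFun_injOn (y : ℕ) (Q : Finset (Finset ℕ)) : Set.InjOn (mvFun y Q) Q := by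
  intro B1 h1 B2 h2 heq
  by_cases c1 : mvCond y Q B1 <;> by_cases c2 : mvCond y Q B2 <;>
    simp only [mvFun, c1, c2, if_pos, if_neg, if_true, if_false] at heq
  · rw [← mvSet_inv c1.1 c1.2.1, ← mvSet_inv c2.1 c2.2.1, heq]
  · exact absurd (heq ▸ h2) c1.2.2
  · exact absurd (heq ▸ h1) c2.2.2
  · exact heq

lemma famMult_compr (y : ℕ) (Q : Finset (Finset ℕ)) (i : ℕ) :
    famMult (compr y Q) i = (Q.filter fun B => i ∈ mvFun y Q B).card := by
  unfold famMult compr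
  rw [← Finset.card_image_of_injOn ((mvFun_injOn y Q).mono (Finset.filter_subset _ Q))]
  congr 1
  ext S
  simp only [Finset.mem_filter, Finset.mem_image]
  constructor
  · rintro ⟨⟨B, hB, rfl⟩, hi⟩; exact ⟨B, ⟨hB, hi⟩, rfl⟩
  · rintro ⟨B, ⟨hB, hi⟩, rfl⟩; exact ⟨⟨B, hB, rfl⟩, hi⟩

lemma famMult_compr_other (y : ℕ) (Q : Finset (Finset ℕ)) (i : ℕ) (h1 : i ≠ y)
    (h2 : i ≠ y + 1) : famMult (compr y Q) i = famMult Q i := by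
  rw [famMult_compr, famMult]
  congr 1
  apply Finset.filter_congr
  intro B _
  unfold mvFun
  split
  · rw [mem_mvSet]; simp only [h1, h2]; tauto
  · rfl

lemma famMult_compr_top (y : ℕ) (Q : Finset (Finset ℕ)) :
    famMult (compr y Q) (y+1) + (Q.filter (mvCond y Q)).card = famMult Q (y+1) := by
  rw [famMult_compr, famMult]
  have key : Q.filter (fun B => y+1 ∈ mvFun y Q B) = Q.filter (fun B => y+1 ∈ B ∧ ¬ mvCond y Q B) := by
    apply Finset.filter_congr
    intro B _
    unfold mvFun
    split <;> rename_i hc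
    · simp only [not_mem_mvSet, false_iff, hc, not_true, and_false]
    · simp [hc]
  rw [key]
  have key2 : Q.filter (mvCond y Q) = Q.filter (fun B => y+1 ∈ B ∧ mvCond y Q B) := by
    apply Finset.filter_congr; intro B _; constructor
    · intro h; exact ⟨h.1, h⟩
    · exact And.right
  rw [key2]
  have := Finset.card_filter_add_card_filter_not (s := Q.filter (fun B => y+1 ∈ B))
    (p := mvCond y Q)
  rw [Finset.filter_filter, Finset.filter_filter] at this
  omega

lemma famMult_compr_bot (y : ℕ) (Q : Finset (Finset ℕ)) :
    famMult (compr y Q) y = famMult Q y + (Q.filter (mvCond y Q)).card := by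
  rw [famMult_compr, famMult]
  have key : Q.filter (fun B => y ∈ mvFun y Q B) = Q.filter (fun B => y ∈ B ∨ mvCond y Q B) := by
    apply Finset.filter_congr
    intro B _
    unfold mvFun
    split <;> rename_i hc
    · simp only [mem_mvSet_self, true_iff, hc, or_true]
    · simp [hc]
  rw [key, Finset.filter_or, Finset.card_union_of_disjoint]
  rw [Finset.disjoint_left]
  intro B hB1 hB2
  rw [Finset.mem_filter] at hB1 hB2
  exact hB2.2.2.1 hB1.2

/-- The key injection lemma. -/
lemma famMult_le_of_inj (y : ℕ) (Q R : Finset (Finset ℕ))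
    (h1 : ∀ B ∈ Q, y + 1 ∈ B → y ∈ B → B ∈ R)
    (h2 : ∀ B ∈ Q, y + 1 ∈ B → y ∉ B → mvSet y B ∈ R) :
    famMult Q (y+1) ≤ famMult R y := by
  unfold famMult
  apply Finset.card_le_card_of_injOn (fun B => if y ∈ B then B else mvSet y B)
  · intro B hB
    simp only [Finset.mem_coe, Finset.mem_filter] at hB ⊢
    by_cases hy : y ∈ B
    · rw [if_pos hy]; exact ⟨h1 B hB.1 hB.2 hy, hy⟩
    · rw [if_neg hy]
      exact ⟨h2 B hB.1 hB.2 hy, mem_mvSet_self⟩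
  · intro B1 hB1 B2 hB2 heq
    simp only [Finset.coe_filter, Set.mem_setOf_eq] at hB1 hB2
    dsimp only at heq
    by_cases c1 : y ∈ B1 <;> by_cases c2 : y ∈ B2
    · rw [if_pos c1, if_pos c2] at heq; exact heq
    · rw [if_pos c1, if_neg c2] at heq; exact absurd (heq ▸ hB1.2) not_mem_mvSet
    · rw [if_neg c1, if_pos c2] at heq; exact absurd (heq ▸ hB2.2) not_mem_mvSet
    · rw [if_neg c1, if_neg c2] at heq
      rw [← mvSet_inv hB1.2 c1, ← mvSet_inv hB2.2 c2, heq]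

lemma famMult_compr_le (y : ℕ) (Q : Finset (Finset ℕ)) :
    famMult (compr y Q) (y+1) ≤ famMult Q y := by
  apply famMult_le_of_inj
  · rintro B hB hy1 hy
    rw [compr, Finset.mem_image] at hB
    obtain ⟨B0, hB0, rfl⟩ := hB
    by_cases hc : mvCond y Q B0
    · rw [mvFun, if_pos hc] at hy1; exact absurd hy1 not_mem_mvSet
    · rw [mvFun, if_neg hc]; exact hB0
  · rintro B hB hy1 hy
    rw [compr, Finset.mem_image] at hB
    obtain ⟨B0, hB0, rfl⟩ := hB
    by_cases hc : mvCond y Q B0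
    · rw [mvFun, if_pos hc] at hy1; exact absurd hy1 not_mem_mvSet
    · rw [mvFun, if_neg hc] at hy1 hy ⊢
      rw [mvCond, not_and, not_and, not_not] at hc
      exact hc hy1 hy

lemma sum_compr (y : ℕ) (Q : Finset (Finset ℕ)) :
    (∑ B ∈ compr y Q, B.sum id) + (Q.filter (mvCond y Q)).card = ∑ B ∈ Q, B.sum id := by
  rw [compr, Finset.sum_image (fun x hx y' hy' h => mvFun_injOn y Q hx hy' h)]
  rw [Finset.card_filter]
  rw [← Finset.sum_add_distrib]
  apply Finset.sum_congr rfl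
  intro B hB
  unfold mvFun
  split <;> rename_i hc
  · exact mvSet_sum hc.1 hc.2.1
  · simp

lemma card_compr (y : ℕ) (Q : Finset (Finset ℕ)) : (compr y Q).card = Q.card :=
  Finset.card_image_of_injOn (mvFun_injOn y Q)

def psum (f : ℕ → ℕ) (c : ℕ) : ℕ := ∑ i ∈ Finset.range (c+1), f i

lemma partSum_range (f : ℕ → ℕ) (N j : ℕ) (h : ∀ i, N ≤ i → f i = 0) :
    partSum f j = ∑ i ∈ Finset.range N, min (f i) j := by
  apply finsum_eq_sum_of_support_subset
  intro x hx
  simp only [Function.mem_support] at hx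
  simp only [Finset.coe_range, Set.mem_Iio]
  by_contra hN
  push_neg at hN
  rw [h x hN] at hx
  simp at hx

lemma step_partSum (f g : ℕ → ℕ) (y T : ℕ)
    (hy : g y = f y + T) (hy1 : g (y+1) + T = f (y+1)) (hle : g (y+1) ≤ f y)
    (hoth : ∀ i, i ≠ y → i ≠ y + 1 → g i = f i)
    (Nf : ℕ) (hNf : ∀ i, Nf ≤ i → f i = 0) (Ng : ℕ) (hNg : ∀ i, Ng ≤ i → g i = 0) :
    ∀ j, partSum g j ≤ partSum f j := by
  intro j
  set N := max (max Nf Ng) (y+2) with hN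
  rw [partSum_range g N j (fun i hi => hNg i (le_trans (le_trans (le_max_right Nf Ng) (le_max_left _ _)) hi)),
      partSum_range f N j (fun i hi => hNf i (le_trans (le_trans (le_max_left Nf Ng) (le_max_left _ _)) hi))]
  have hsub : ({y, y+1} : Finset ℕ) ⊆ Finset.range N := by
    intro i hi
    simp only [Finset.mem_insert, Finset.mem_singleton] at hi
    rw [Finset.mem_range]
    rcases hi with rfl | rfl <;> omega
  rw [← Finset.sum_sdiff hsub (f := fun i => min (g i) j), ← Finset.sum_sdiff hsub (f := fun i => min (f i) j)]
  have h1 : ∑ i ∈ Finset.range N \ {y, y+1}, min (g i) j = ∑ i ∈ Finset.range N \ {y, y+1}, min (f i) j := by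
    apply Finset.sum_congr rfl
    intro i hi
    simp only [Finset.mem_sdiff, Finset.mem_insert, Finset.mem_singleton, not_or] at hi
    rw [hoth i hi.2.1 hi.2.2]
  have hyne : y ≠ y + 1 := by omega
  have h2 : ∑ i ∈ ({y, y+1} : Finset ℕ), min (g i) j ≤ ∑ i ∈ ({y, y+1} : Finset ℕ), min (f i) j := by
    rw [Finset.sum_pair hyne, Finset.sum_pair hyne]
    omega
  omega

lemma step_psum (f g : ℕ → ℕ) (y T : ℕ)
    (hy : g y = f y + T) (hy1 : g (y+1) + T = f (y+1))
    (hoth : ∀ i, i ≠ y → i ≠ y + 1 → g i = f i) :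
    (∀ c, psum f c ≤ psum g c) ∧ psum g y = psum f y + T := by
  have hmain : ∀ c, psum f c ≤ psum g c ∧ (c = y → psum g c = psum f c + T) := by
    intro c
    rcases lt_trichotomy c y with hc | rfl | hc
    · have : psum g c = psum f c := by
        apply Finset.sum_congr rfl
        intro i hi
        rw [Finset.mem_range] at hi
        exact hoth i (by omega) (by omega)
      exact ⟨le_of_eq this.symm, fun h => absurd h (by omega)⟩
    · have hsub : ({c} : Finset ℕ) ⊆ Finset.range (c+1) := by
        intro i hi; simp only [Finset.mem_singleton] at hi; rw [Finset.mem_range]; omega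
      have e : psum g c = psum f c + T := by
        unfold psum
        rw [← Finset.sum_sdiff hsub (f := g), ← Finset.sum_sdiff hsub (f := f)]
        have h1 : ∑ i ∈ Finset.range (c+1) \ {c}, g i = ∑ i ∈ Finset.range (c+1) \ {c}, f i := by
          apply Finset.sum_congr rfl
          intro i hi
          simp only [Finset.mem_sdiff, Finset.mem_range, Finset.mem_singleton] at hi
          exact hoth i hi.2 (by omega)
        rw [Finset.sum_singleton, Finset.sum_singleton, hy]
        omega
      exact ⟨by omega, fun _ => e⟩
    · have hsub : ({y, y+1} : Finset ℕ) ⊆ Finset.range (c+1) := by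
        intro i hi
        simp only [Finset.mem_insert, Finset.mem_singleton] at hi
        rw [Finset.mem_range]
        rcases hi with rfl | rfl <;> omega
      have e : psum g c = psum f c := by
        unfold psum
        rw [← Finset.sum_sdiff hsub (f := g), ← Finset.sum_sdiff hsub (f := f)]
        have h1 : ∑ i ∈ Finset.range (c+1) \ {y, y+1}, g i = ∑ i ∈ Finset.range (c+1) \ {y, y+1}, f i := by
          apply Finset.sum_congr rfl
          intro i hi
          simp only [Finset.mem_sdiff, Finset.mem_insert, Finset.mem_singleton, not_or] at hi
          exact hoth i hi.2.1 hi.2.2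
        have hyne : y ≠ y + 1 := by omega
        rw [Finset.sum_pair hyne, Finset.sum_pair hyne]
        omega
      exact ⟨le_of_eq e.symm, fun h => absurd h (by omega)⟩
  exact ⟨fun c => (hmain c).1, (hmain y).2 rfl⟩

lemma psum_lt_exists_ne (f g : ℕ → ℕ) (c : ℕ) (h : psum f c < psum g c) :
    ∃ i, g i ≠ f i := by
  by_contra hc
  push_neg at hc
  have : psum g c = psum f c := Finset.sum_congr rfl fun i _ => hc i
  omega

lemma list_descent (lA lB : List ℕ) (hlen : lA.length = lB.length)
    (hsA : lA.Pairwise (· < ·)) (hsB : lB.Pairwise (· < ·))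
    (hmaj : ∀ r, lA.getD r 0 ≤ lB.getD r 0) (hne : lA ≠ lB)
    (hpos : ∀ x ∈ lA, 1 ≤ x) :
    ∃ y r, 1 ≤ y ∧ (∃ h : r < lB.length, lB[r] = y + 1) ∧ y ∉ lB ∧
      (lB.set r y).Pairwise (· < ·) ∧
      (∀ z, z ∈ lB.set r y ↔ z = y ∨ (z ∈ lB ∧ z ≠ y + 1)) ∧
      (∀ r', lA.getD r' 0 ≤ (lB.set r y).getD r' 0) := by
  have hex : ∃ r, lA.getD r 0 ≠ lB.getD r 0 := by
    by_contra h
    push_neg at h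
    exact hne (List.ext_getElem hlen (fun i h1 h2 => by
      have := h i
      rwa [List.getD_eq_getElem lA 0 h1, List.getD_eq_getElem lB 0 h2] at this))
  obtain ⟨r, hrspec, hmin⟩ : ∃ r, lA.getD r 0 ≠ lB.getD r 0 ∧
      ∀ i, i < r → lA.getD i 0 = lB.getD i 0 :=
    ⟨Nat.find hex, Nat.find_spec hex, fun i hi => not_not.mp (Nat.find_min hex hi)⟩
  have hrB : r < lB.length := by
    by_contra hge
    push_neg at hge
    rw [List.getD_eq_default lA 0 (by omega), List.getD_eq_default lB 0 (by omega)] at hrspec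
    exact hrspec rfl
  have hrA : r < lA.length := by omega
  have hstrictB : ∀ i j (hi : i < lB.length) (hj : j < lB.length), i < j → lB[i] < lB[j] :=
    fun i j hi hj hij => List.pairwise_iff_getElem.mp hsB i j hi hj hij
  have hstrictA : ∀ i j (hi : i < lA.length) (hj : j < lA.length), i < j → lA[i] < lA[j] :=
    fun i j hi hj hij => List.pairwise_iff_getElem.mp hsA i j hi hj hij
  have hminE : ∀ i, i < r → ∀ (h1 : i < lA.length) (h2 : i < lB.length), lA[i] = lB[i] := by
    intro i hi h1 h2
    have := hmin i hi
    rwa [List.getD_eq_getElem lA 0 h1, List.getD_eq_getElem lB 0 h2] at this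
  have hab : lA[r] < lB[r] := by
    have h1 := hmaj r
    rw [List.getD_eq_getElem lA 0 hrA, List.getD_eq_getElem lB 0 hrB] at h1 hrspec
    omega
  have ha1 : 1 ≤ lA[r] := hpos _ (List.getElem_mem hrA)
  refine ⟨lB[r] - 1, r, by omega, ⟨hrB, by omega⟩, ?_, ?_, ?_, ?_⟩
  · -- lB[r] - 1 ∉ lB
    intro hy'
    obtain ⟨i, hi, hiy⟩ := List.mem_iff_getElem.mp hy'
    have hir : i < r := by
      rcases lt_trichotomy i r with h | h | h
      · exact h
      · exfalso; subst h; omega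
      · exact absurd (hstrictB r i hrB hi h) (by omega)
    have heq := hminE i hir (by omega) hi
    have hlt : lA[i] < lA[r] := hstrictA i r (by omega) hrA hir
    omega
  · -- sortedness of the set list
    apply List.pairwise_iff_getElem.mpr
    intro i j hi hj hij
    rw [List.length_set] at hi hj
    rw [List.getElem_set, List.getElem_set]
    split_ifs with h1 h2 h2
    · omega
    · have := hstrictB r j hrB hj (by omega)
      omega
    · subst h2
      have heq := hminE i (by omega) (by omega) hi
      have hlt : lA[i] < lA[r] := hstrictA i r (by omega) hrA (by omega)
      omega
    · exact hstrictB i j hi hj hij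
  · -- membership
    intro z
    constructor
    · intro hz
      obtain ⟨i, hi, rfl⟩ := List.mem_iff_getElem.mp hz
      rw [List.length_set] at hi
      rw [List.getElem_set]
      split_ifs with h1
      · exact Or.inl rfl
      · refine Or.inr ⟨List.getElem_mem hi, ?_⟩
        rcases lt_trichotomy i r with h | h | h
        · have := hstrictB i r hi hrB h; omega
        · exact absurd h.symm h1
        · have := hstrictB r i hrB hi h; omega
    · rintro (rfl | ⟨hzB, hzne⟩)
      · refine List.mem_iff_getElem.mpr ⟨r, by rw [List.length_set]; omega, ?_⟩
        rw [List.getElem_set, if_pos rfl]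
      · obtain ⟨i, hi, hik⟩ := List.mem_iff_getElem.mp hzB
        have hir : r ≠ i := by
          intro h
          subst h
          omega
        refine List.mem_iff_getElem.mpr ⟨i, by rw [List.length_set]; omega, ?_⟩
        rw [List.getElem_set, if_neg hir]
        exact hik
  · -- majorization
    intro r'
    by_cases hr' : r' < lA.length
    · rw [List.getD_eq_getElem lA 0 hr', List.getD_eq_getElem _ 0 (by rw [List.length_set]; omega)]
      rw [List.getElem_set]
      split_ifs with h
      · subst h; omega
      · have h1 := hmaj r'
        rw [List.getD_eq_getElem lA 0 hr', List.getD_eq_getElem lB 0 (by omega)] at h1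
        exact h1
    · rw [List.getD_eq_default lA 0 (by omega)]
      exact Nat.zero_le _

lemma descent {A B : Finset ℕ} (hcard : A.card = B.card) (hApos : ∀ x ∈ A, 1 ≤ x)
    (hmaj : SetMaj A B) (hne : A ≠ B) :
    ∃ y : ℕ, 1 ≤ y ∧ y + 1 ∈ B ∧ y ∉ B ∧ SetMaj A (mvSet y B) := by
  have hlen : (A.sort (· ≤ ·)).length = (B.sort (· ≤ ·)).length := by
    rw [Finset.length_sort, Finset.length_sort, hcard]
  have hne' : A.sort (· ≤ ·) ≠ B.sort (· ≤ ·) := by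
    intro h
    apply hne
    ext z
    rw [← Finset.mem_sort (α := ℕ) (· ≤ ·), ← Finset.mem_sort (α := ℕ) (· ≤ ·), h]
  obtain ⟨y, r, hy1, ⟨hr, hb⟩, hynot, hsorted', hmem', hmaj'⟩ :=
    list_descent (A.sort (· ≤ ·)) (B.sort (· ≤ ·)) hlen A.sortedLT_sort.pairwise B.sortedLT_sort.pairwise
      hmaj hne' (fun x hx => hApos x ((Finset.mem_sort (· ≤ ·)).1 hx))
  have hyB : y ∉ B := fun h => hynot ((Finset.mem_sort (· ≤ ·)).2 h)
  have hbB : y + 1 ∈ B := hb ▸ (Finset.mem_sort (· ≤ ·)).1 (List.getElem_mem hr)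
  have hsort' : (mvSet y B).sort (· ≤ ·) = (B.sort (· ≤ ·)).set r y := by
    refine List.Perm.eq_of_pairwise' (Finset.pairwise_sort _ _) (hsorted'.imp fun h => le_of_lt h) ?_
    apply List.perm_of_nodup_nodup_toFinset_eq (Finset.sort_nodup _ _)
      (hsorted'.imp fun h => ne_of_lt h)
    ext z
    simp only [List.mem_toFinset]
    rw [Finset.mem_sort, hmem' z, mem_mvSet]
    constructor
    · rintro (rfl | ⟨h1, h2⟩)
      · exact Or.inl rfl
      · exact Or.inr ⟨(Finset.mem_sort (· ≤ ·)).2 h1, h2⟩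
    · rintro (rfl | ⟨h1, h2⟩)
      · exact Or.inl rfl
      · exact Or.inr ⟨(Finset.mem_sort (· ≤ ·)).1 h1, h2⟩
  refine ⟨y, hy1, hbB, hyB, ?_⟩
  intro r'
  rw [hsort']
  exact hmaj' r'


def ECfam (Q : Finset (Finset ℕ)) : Prop :=
  ∀ B ∈ Q, ∀ y : ℕ, 1 ≤ y → y + 1 ∈ B → y ∉ B → mvSet y B ∈ Q

lemma ClosedFam_of_ECfam {m : ℕ} {Q : Finset (Finset ℕ)} (hQ : ∀ S ∈ Q, S.card = m)
    (hEC : ECfam Q) : ClosedFam m Q := by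
  intro B hB A hAcard hApos hmaj
  suffices H : ∀ N (B : Finset ℕ), B ∈ Q → B.sum id ≤ N → SetMaj A B → A ∈ Q from
    H (B.sum id) B hB le_rfl hmaj
  intro N
  induction N with
  | zero =>
    intro B hB hsum hmaj'
    rcases eq_or_ne A B with rfl | hne
    · exact hB
    · obtain ⟨y, hy1, hyB1, hyB, _⟩ := descent (hAcard.trans (hQ B hB).symm) hApos hmaj' hne
      have := mvSet_sum hyB1 hyB
      omega
  | succ N ih =>
    intro B hB hsum hmaj'
    rcases eq_or_ne A B with rfl | hne
    · exact hB
    · obtain ⟨y, hy1, hyB1, hyB, hmaj''⟩ :=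
        descent (hAcard.trans (hQ B hB).symm) hApos hmaj' hne
      have hsum' := mvSet_sum hyB1 hyB
      exact ih (mvSet y B) (hEC B hB y hy1 hyB1 hyB) (by omega) hmaj''

lemma famMult_adj {Q : Finset (Finset ℕ)} (hEC : ECfam Q) {y : ℕ} (hy : 1 ≤ y) :
    famMult Q (y+1) ≤ famMult Q y :=
  famMult_le_of_inj y Q Q (fun B hB _ _ => hB) (fun B hB h1 h2 => hEC B hB y hy h1 h2)

lemma famMult_mono {Q : Finset (Finset ℕ)} (hEC : ECfam Q) :
    ∀ i j : ℕ, 1 ≤ i → i ≤ j → famMult Q j ≤ famMult Q i := by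
  intro i j hi hij
  induction j, hij using Nat.le_induction with
  | base => exact le_rfl
  | succ j hij ih => exact le_trans (famMult_adj hEC (by omega)) ih

lemma famMult_zero {Q : Finset (Finset ℕ)} (hpos : ∀ S ∈ Q, ∀ x ∈ S, 1 ≤ x) :
    famMult Q 0 = 0 := by
  rw [famMult, Finset.card_eq_zero, Finset.filter_eq_empty_iff]
  intro S hS h0
  have := hpos S hS 0 h0
  omega

lemma famMult_bound (Q : Finset (Finset ℕ)) (i : ℕ) (h : (Q.sup fun B => B.sup id) < i) :
    famMult Q i = 0 := by
  rw [famMult, Finset.card_eq_zero, Finset.filter_eq_empty_iff]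
  intro S hS hi
  have h1 : i ≤ S.sup id := Finset.le_sup (f := id) hi
  have h2 : S.sup id ≤ Q.sup (fun B => B.sup id) := Finset.le_sup (f := fun B => B.sup id) hS
  omega

lemma tupMult_bound {k : ℕ} (P : Fin k → Finset (Finset ℕ)) :
    ∃ N, ∀ i, N ≤ i → tupMult P i = 0 := by
  refine ⟨(Finset.univ.sup fun j => (P j).sup fun B => B.sup id) + 1, fun i hi => ?_⟩
  rw [tupMult]
  apply Finset.sum_eq_zero
  intro j _
  apply famMult_bound
  have := Finset.le_sup (f := fun j => (P j).sup fun B => B.sup id) (Finset.mem_univ j)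
  omega

lemma isSetFamily_compr {m n y : ℕ} {Q : Finset (Finset ℕ)} (hy : 1 ≤ y)
    (h : IsSetFamily m n Q) : IsSetFamily m n (compr y Q) := by
  constructor
  · rw [card_compr]; exact h.1
  · intro S hS
    rw [compr, Finset.mem_image] at hS
    obtain ⟨B, hB, rfl⟩ := hS
    by_cases hc : mvCond y Q B
    · rw [mvFun, if_pos hc]
      obtain ⟨hcard, hpos⟩ := h.2 B hB
      refine ⟨by rw [mvSet_card hc.1 hc.2.1, hcard], ?_⟩
      intro x hx
      rw [mem_mvSet] at hx
      rcases hx with rfl | ⟨hxB, _⟩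
      · exact hy
      · exact hpos x hxB
    · rw [mvFun, if_neg hc]; exact h.2 B hB

def PhiT {k : ℕ} (P : Fin k → Finset (Finset ℕ)) : ℕ := ∑ j, ∑ B ∈ P j, B.sum id

lemma main_aux (m k : ℕ) (n : Fin k → ℕ) : ∀ W (P : Fin k → Finset (Finset ℕ)),
    (∀ j, IsSetFamily m (n j) (P j)) → PhiT P ≤ W →
    ∃ P', (∀ j, IsSetFamily m (n j) (P' j)) ∧ (∀ j, ECfam (P' j)) ∧
      (∀ j, partSum (tupMult P') j ≤ partSum (tupMult P) j) ∧
      (∀ c, psum (tupMult P) c ≤ psum (tupMult P') c) ∧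
      ((¬ ∀ j, ECfam (P j)) → ∃ c, psum (tupMult P) c < psum (tupMult P') c) := by
  intro W
  induction W with
  | zero =>
    intro P hP hPhi
    by_cases hEC : ∀ j, ECfam (P j)
    · exact ⟨P, hP, hEC, fun j => le_rfl, fun c => le_rfl, fun h => absurd hEC h⟩
    · exfalso
      obtain ⟨j0, hj0⟩ := not_forall.mp hEC
      rw [ECfam] at hj0
      push_neg at hj0
      obtain ⟨B0, hB0, y, hy1, hyB1, hyB, hnot⟩ := hj0
      have hB0sum : y + 1 ≤ B0.sum id := Finset.single_le_sum (f := id) (fun i _ => Nat.zero_le i) hyB1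
      have h1 := Finset.single_le_sum (f := fun B => B.sum id) (fun B _ => Nat.zero_le _) hB0
      have h2 : (∑ B ∈ P j0, B.sum id) ≤ PhiT P :=
        Finset.single_le_sum (f := fun j => ∑ B ∈ P j, B.sum id)
          (fun j _ => Nat.zero_le _) (Finset.mem_univ j0)
      omega
  | succ W ih =>
    intro P hP hPhi
    by_cases hEC : ∀ j, ECfam (P j)
    · exact ⟨P, hP, hEC, fun j => le_rfl, fun c => le_rfl, fun h => absurd hEC h⟩
    · obtain ⟨j0, hj0⟩ := not_forall.mp hEC
      rw [ECfam] at hj0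
      push_neg at hj0
      obtain ⟨B0, hB0, y, hy1, hyB1, hyB, hnot⟩ := hj0
      set P1 : Fin k → Finset (Finset ℕ) := fun j => compr y (P j) with hP1def
      set T : ℕ := ∑ j, ((P j).filter (mvCond y (P j))).card with hTdef
      have hT1 : 1 ≤ T := by
        have hj0T : 1 ≤ ((P j0).filter (mvCond y (P j0))).card := by
          rw [Nat.one_le_iff_ne_zero, Ne, Finset.card_eq_zero, ← Ne, ← Finset.nonempty_iff_ne_empty]
          exact ⟨B0, Finset.mem_filter.mpr ⟨hB0, hyB1, hyB, hnot⟩⟩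
        calc 1 ≤ ((P j0).filter (mvCond y (P j0))).card := hj0T
          _ ≤ T := Finset.single_le_sum (f := fun j => ((P j).filter (mvCond y (P j))).card)
              (fun j _ => Nat.zero_le _) (Finset.mem_univ j0)
      have hgy : tupMult P1 y = tupMult P y + T := by
        rw [tupMult, tupMult, hTdef, ← Finset.sum_add_distrib]
        exact Finset.sum_congr rfl fun j _ => famMult_compr_bot y (P j)
      have hgy1 : tupMult P1 (y+1) + T = tupMult P (y+1) := by
        rw [tupMult, tupMult, hTdef, ← Finset.sum_add_distrib]
        exact Finset.sum_congr rfl fun j _ => famMult_compr_top y (P j)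
      have hgle : tupMult P1 (y+1) ≤ tupMult P y :=
        Finset.sum_le_sum fun j _ => famMult_compr_le y (P j)
      have hoth : ∀ i, i ≠ y → i ≠ y + 1 → tupMult P1 i = tupMult P i := fun i h1 h2 =>
        Finset.sum_congr rfl fun j _ => famMult_compr_other y (P j) i h1 h2
      have hPhi1 : PhiT P1 + T = PhiT P := by
        rw [PhiT, PhiT, hTdef, ← Finset.sum_add_distrib]
        exact Finset.sum_congr rfl fun j _ => sum_compr y (P j)
      have hshape1 : ∀ j, IsSetFamily m (n j) (P1 j) := fun j => isSetFamily_compr hy1 (hP j)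
      obtain ⟨P', h1, h2, h3, h4, _⟩ := ih P1 hshape1 (by omega)
      obtain ⟨Nf, hNf⟩ := tupMult_bound P
      obtain ⟨Ng, hNg⟩ := tupMult_bound P1
      have hstep := step_partSum (tupMult P) (tupMult P1) y T hgy hgy1 hgle hoth Nf hNf Ng hNg
      have hpsum := step_psum (tupMult P) (tupMult P1) y T hgy hgy1 hoth
      refine ⟨P', h1, h2, fun j => le_trans (h3 j) (hstep j),
        fun c => le_trans (hpsum.1 c) (h4 c), fun _ => ⟨y, ?_⟩⟩
      have := hpsum.2
      have := h4 y
      omega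

/-- Any set family tuple with defined type can be replaced by a closed one
whose type is dominated by the original; strictly so if the original tuple is not closed. -/
theorem stmt_0 (m k : ℕ) (n : Fin k → ℕ) (P : Fin k → Finset (Finset ℕ))
    (hP : ∀ j, IsSetFamily m (n j) (P j))
    (htype : TypeDefined (tupMult P)) :
    ∃ P' : Fin k → Finset (Finset ℕ),
      (∀ j, IsSetFamily m (n j) (P' j)) ∧
      (∀ j, ClosedFam m (P' j)) ∧
      TypeDefined (tupMult P') ∧
      ConjDom (tupMult P') (tupMult P) ∧
      (¬ (∀ j, ClosedFam m (P j)) → ConjStrictDom (tupMult P') (tupMult P)) := by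
  obtain ⟨P', h1, h2, h3, h4, h5⟩ := main_aux m k n (PhiT P) P hP le_rfl
  refine ⟨P', h1, fun j => ClosedFam_of_ECfam (fun S hS => ((h1 j).2 S hS).1) (h2 j),
    ?_, h3, ?_⟩
  · intro i j hi hij
    exact Finset.sum_le_sum fun j' _ => famMult_mono (h2 j') i j hi hij
  · intro hnc
    have hnec : ¬ ∀ j, ECfam (P j) := fun hec =>
      hnc fun j => ClosedFam_of_ECfam (fun S hS => ((hP j).2 S hS).1) (hec j)
    obtain ⟨c, hc⟩ := h5 hnec
    obtain ⟨i, hne⟩ := psum_lt_exists_ne (tupMult P) (tupMult P') c hc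
    refine ⟨h3, i, ?_, hne⟩
    rcases Nat.eq_zero_or_pos i with rfl | hpos
    · exfalso
      apply hne
      have e1 : tupMult P' 0 = 0 :=
        Finset.sum_eq_zero fun j _ => famMult_zero fun S hS => ((h1 j).2 S hS).2
      have e2 : tupMult P 0 = 0 :=
        Finset.sum_eq_zero fun j _ => famMult_zero fun S hS => ((hP j).2 S hS).2
      rw [e1, e2]
    · exact hpos
end

section
/- Every minimal set family tuple is closed: if (P_1,…,P_k) is a set family tuple with defined type λ, each P_j of shape (m^{n_j}), and there is no set family tuple (R_1,…,R_k) with each R_j of shape (m^{n_j}) whose type is defined and strictly dominated by λ, then every P_j is closed. -/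
open Finset

lemma famMult_eq_sum (Q : Finset (Finset ℕ)) (i : ℕ) :
    famMult Q i = ∑ S ∈ Q, (if i ∈ S then 1 else 0) := by
  rw [famMult, Finset.card_filter]

section Swap

variable {Q : Finset (Finset ℕ)} {C : Finset ℕ} {a b : ℕ}

lemma card_swapC (hb : b ∈ C) (ha : a ∉ C) : (insert a (C.erase b)).card = C.card := by
  rw [Finset.card_insert_of_notMem (fun h => ha (Finset.mem_of_mem_erase h)),
    Finset.card_erase_of_mem hb]
  have : 1 ≤ C.card := Finset.card_pos.2 ⟨b, hb⟩
  omega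

lemma sum_swapC (hb : b ∈ C) (ha : a ∉ C) :
    (∑ x ∈ insert a (C.erase b), x) + b = (∑ x ∈ C, x) + a := by
  rw [Finset.sum_insert (fun h => ha (Finset.mem_of_mem_erase h)),
    ← Finset.sum_erase_add C _ hb]
  omega

lemma card_swapped (hC : C ∈ Q) (hC' : insert a (C.erase b) ∉ Q) :
    (insert (insert a (C.erase b)) (Q.erase C)).card = Q.card := by
  rw [Finset.card_insert_of_notMem (fun h => hC' (Finset.mem_of_mem_erase h)),
    Finset.card_erase_of_mem hC]
  have : 1 ≤ Q.card := Finset.card_pos.2 ⟨C, hC⟩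
  omega

lemma mem_swapped {S : Finset ℕ} (hS : S ∈ insert (insert a (C.erase b)) (Q.erase C)) :
    S = insert a (C.erase b) ∨ S ∈ Q := by
  rcases Finset.mem_insert.1 hS with h | h
  · exact Or.inl h
  · exact Or.inr (Finset.mem_of_mem_erase h)

lemma famMult_swapped (hC : C ∈ Q) (hC' : insert a (C.erase b) ∉ Q) (x : ℕ) :
    famMult (insert (insert a (C.erase b)) (Q.erase C)) x + (if x ∈ C then 1 else 0)
      = famMult Q x + (if x ∈ insert a (C.erase b) then 1 else 0) := by
  rw [famMult_eq_sum, famMult_eq_sum,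
    Finset.sum_insert (fun h => hC' (Finset.mem_of_mem_erase h)),
    ← Finset.sum_erase_add Q _ hC]
  omega

lemma sum_swapped (hC : C ∈ Q) (hC' : insert a (C.erase b) ∉ Q) :
    (∑ S ∈ insert (insert a (C.erase b)) (Q.erase C), ∑ x ∈ S, x) + (∑ x ∈ C, x)
      = (∑ S ∈ Q, ∑ x ∈ S, x) + (∑ x ∈ insert a (C.erase b), x) := by
  rw [Finset.sum_insert (fun h => hC' (Finset.mem_of_mem_erase h)),
    ← Finset.sum_erase_add Q _ hC]
  omega

end Swap

-- counting lemma
lemma famMult_succ_le (Q : Finset (Finset ℕ)) (i : ℕ)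
    (h : ∀ C ∈ Q, i + 1 ∈ C → i ∉ C → insert i (C.erase (i+1)) ∈ Q) :
    famMult Q (i+1) ≤ famMult Q i := by
  classical
  have key : (Q.filter fun C => i + 1 ∈ C ∧ i ∉ C).card
      ≤ (Q.filter fun C => i ∈ C ∧ i + 1 ∉ C).card := by
    apply Finset.card_le_card_of_injOn (fun C => insert i (C.erase (i+1)))
    · intro C hC
      rw [Finset.mem_coe, Finset.mem_filter] at hC ⊢
      obtain ⟨hCQ, hmem, hni⟩ := hC
      refine ⟨h C hCQ hmem hni, Finset.mem_insert_self _ _, ?_⟩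
      intro hcon
      rcases Finset.mem_insert.1 hcon with h' | h'
      · omega
      · exact (Finset.notMem_erase _ _) h'
    · intro C hC D hD hCD
      rw [Finset.coe_filter, Set.mem_setOf_eq] at hC hD
      have hrec : ∀ E : Finset ℕ, i + 1 ∈ E → i ∉ E →
          insert (i+1) ((insert i (E.erase (i+1))).erase i) = E := by
        intro E h1 h2
        have hni : i ∉ E.erase (i+1) := fun hcon => h2 (Finset.mem_of_mem_erase hcon)
        rw [Finset.erase_insert hni, Finset.insert_erase h1]
      have h5 := congrArg (fun T : Finset ℕ => insert (i+1) (T.erase i)) hCD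
      dsimp only at h5
      rw [hrec C hC.2.1 hC.2.2, hrec D hD.2.1 hD.2.2] at h5
      exact h5
  have hsplit : ∀ y : ℕ, (Q.filter fun C => y ∈ C).card
      = (Q.filter fun C => y ∈ C ∧ i ∈ C ∧ i + 1 ∈ C).card
        + (Q.filter fun C => y ∈ C ∧ ¬ (i ∈ C ∧ i + 1 ∈ C)).card := by
    intro y
    classical
    have h6 := Finset.card_filter_add_card_filter_not
      (s := Q.filter fun C => y ∈ C) (p := fun C => i ∈ C ∧ i + 1 ∈ C)
    rw [Finset.filter_filter, Finset.filter_filter] at h6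
    omega
  have e1 := hsplit (i+1)
  have e2 := hsplit i
  have f1 : (Q.filter fun C => i + 1 ∈ C ∧ ¬ (i ∈ C ∧ i + 1 ∈ C)).card
      = (Q.filter fun C => i + 1 ∈ C ∧ i ∉ C).card := by
    congr 1
    apply Finset.filter_congr
    intro S _
    constructor <;> (intro hx; tauto)
  have f2 : (Q.filter fun C => i ∈ C ∧ ¬ (i ∈ C ∧ i + 1 ∈ C)).card
      = (Q.filter fun C => i ∈ C ∧ i + 1 ∉ C).card := by
    congr 1
    apply Finset.filter_congr
    intro S _
    constructor <;> (intro hx; tauto)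
  have f3 : (Q.filter fun C => i + 1 ∈ C ∧ i ∈ C ∧ i + 1 ∈ C).card
      = (Q.filter fun C => i ∈ C ∧ i ∈ C ∧ i + 1 ∈ C).card := by
    congr 1
    apply Finset.filter_congr
    intro S _
    constructor <;> (intro hx; tauto)
  rw [famMult, famMult]
  omega

-- tuple-level lemmas
lemma typeDefined_of_step {f : ℕ → ℕ} (h : ∀ i, 1 ≤ i → f (i+1) ≤ f i) :
    TypeDefined f := by
  intro i j hi hij
  induction j, hij using Nat.le_induction with
  | base => exact le_refl _
  | succ j hij ih => exact le_trans (h j (le_trans hi hij)) ih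

lemma exists_swap_mult {k : ℕ} (R : Fin k → Finset (Finset ℕ)) (i : ℕ)
    (h : tupMult R i < tupMult R (i+1)) :
    ∃ l : Fin k, ∃ C ∈ R l, i + 1 ∈ C ∧ i ∉ C ∧ insert i (C.erase (i+1)) ∉ R l := by
  by_contra hcon
  push_neg at hcon
  have : tupMult R (i+1) ≤ tupMult R i := by
    apply Finset.sum_le_sum
    intro l _
    exact famMult_succ_le (R l) i (fun C hC h1 h2 => hcon l C hC h1 h2)
  omega

lemma tupMult_update {k : ℕ} (R : Fin k → Finset (Finset ℕ)) (l : Fin k)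
    (Q' : Finset (Finset ℕ)) (x : ℕ) :
    tupMult (Function.update R l Q') x + famMult (R l) x = tupMult R x + famMult Q' x := by
  classical
  unfold tupMult
  have hpt : ∀ j, famMult (Function.update R l Q' j) x
      = Function.update (fun j => famMult (R j) x) l (famMult Q' x) j := by
    intro j
    by_cases hj : j = l
    · subst hj; simp
    · simp [Function.update_of_ne hj]
  rw [Finset.sum_congr rfl (fun j _ => hpt j),
    Finset.sum_update_of_mem (Finset.mem_univ l),
    ← Finset.sum_erase_add Finset.univ _ (Finset.mem_univ l), Finset.erase_eq]
  omega

lemma weight_update {k : ℕ} (R : Fin k → Finset (Finset ℕ)) (l : Fin k)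
    (Q' : Finset (Finset ℕ)) :
    (∑ j, ∑ S ∈ Function.update R l Q' j, ∑ x ∈ S, x) + (∑ S ∈ R l, ∑ x ∈ S, x)
      = (∑ j, ∑ S ∈ R j, ∑ x ∈ S, x) + (∑ S ∈ Q', ∑ x ∈ S, x) := by
  classical
  have hpt : ∀ j, (∑ S ∈ Function.update R l Q' j, ∑ x ∈ S, x)
      = Function.update (fun j => ∑ S ∈ R j, ∑ x ∈ S, x) l (∑ S ∈ Q', ∑ x ∈ S, x) j := by
    intro j
    by_cases hj : j = l
    · subst hj; simp
    · simp [Function.update_of_ne hj]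
  rw [Finset.sum_congr rfl (fun j _ => hpt j),
    Finset.sum_update_of_mem (Finset.mem_univ l),
    ← Finset.sum_erase_add Finset.univ _ (Finset.mem_univ l), Finset.erase_eq]
  omega

lemma tup_support {k : ℕ} (R : Fin k → Finset (Finset ℕ)) :
    ∃ N : ℕ, ∀ x, N ≤ x → tupMult R x = 0 := by
  classical
  refine ⟨(Finset.univ.sup fun l => (R l).sup fun S => S.sup id) + 1, fun x hx => ?_⟩
  unfold tupMult
  apply Finset.sum_eq_zero
  intro l _
  rw [famMult, Finset.card_eq_zero, Finset.filter_eq_empty_iff]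
  intro S hS hxS
  have h1 : x ≤ S.sup id := Finset.le_sup (f := id) hxS
  have h2 : (S.sup id) ≤ (R l).sup fun S => S.sup id := Finset.le_sup hS
  have h3 : ((R l).sup fun S => S.sup id) ≤ Finset.univ.sup fun l => (R l).sup fun S => S.sup id :=
    Finset.le_sup (f := fun l => (R l).sup fun S => S.sup id) (Finset.mem_univ l)
  omega

lemma partSum_eq_sum {f : ℕ → ℕ} {N j : ℕ} (hN : ∀ x, N ≤ x → f x = 0) :
    partSum f j = ∑ x ∈ Finset.range N, min (f x) j := by
  apply finsum_eq_sum_of_support_subset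
  intro x hx
  simp only [Function.mem_support] at hx
  simp only [Finset.coe_range, Set.mem_Iio]
  by_contra hcon
  push_neg at hcon
  rw [hN x hcon] at hx
  simp at hx

lemma partSum_move_le {f g : ℕ → ℕ} (hf : TypeDefined f)
    {Nf Ng : ℕ} (hNf : ∀ x, Nf ≤ x → f x = 0) (hNg : ∀ x, Ng ≤ x → g x = 0)
    {p q : ℕ} (hp : 1 ≤ p) (hpq : p < q) (hgp : g p = f p + 1) (hgq : g q + 1 = f q)
    (hoth : ∀ x, x ≠ p → x ≠ q → g x = f x) : ConjDom g f := by
  intro j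
  set N := max (max Nf Ng) (q+1) with hN
  have hfN : ∀ x, N ≤ x → f x = 0 := fun x hx => hNf x (by omega)
  have hgN : ∀ x, N ≤ x → g x = 0 := fun x hx => hNg x (by omega)
  rw [partSum_eq_sum hfN, partSum_eq_sum hgN]
  have hpN : p ∈ Finset.range N := Finset.mem_range.2 (by omega)
  have hqN : q ∈ (Finset.range N).erase p := by
    rw [Finset.mem_erase, Finset.mem_range]
    omega
  rw [← Finset.add_sum_erase _ (fun x => min (g x) j) hpN,
    ← Finset.add_sum_erase _ (fun x => min (g x) j) hqN,
    ← Finset.add_sum_erase _ (fun x => min (f x) j) hpN,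
    ← Finset.add_sum_erase _ (fun x => min (f x) j) hqN]
  have htail : ∑ x ∈ ((Finset.range N).erase p).erase q, min (g x) j
      = ∑ x ∈ ((Finset.range N).erase p).erase q, min (f x) j := by
    apply Finset.sum_congr rfl
    intro x hx
    rw [Finset.mem_erase, Finset.mem_erase] at hx
    rw [hoth x hx.2.1 hx.1]
  have hfq : f q ≤ f p := hf p q hp (le_of_lt hpq)
  omega

-- sorted list helpers (getD versions)
lemma sorted_lt_getD {L : List ℕ} (h : L.Pairwise (· < ·)) {i j : ℕ} (hij : i < j)
    (hj : j < L.length) : L.getD i 0 < L.getD j 0 := by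
  rw [List.getD_eq_getElem _ _ (by omega), List.getD_eq_getElem _ _ hj]
  have := h.rel_get_of_lt (a := ⟨i, by omega⟩) (b := ⟨j, hj⟩) (by simpa using hij)
  simpa using this

lemma sorted_le_getD {L : List ℕ} (h : L.Pairwise (· ≤ ·)) {i j : ℕ} (hij : i ≤ j)
    (hj : j < L.length) : L.getD i 0 ≤ L.getD j 0 := by
  rw [List.getD_eq_getElem _ _ (by omega), List.getD_eq_getElem _ _ hj]
  have := h.rel_get_of_le (a := ⟨i, by omega⟩) (b := ⟨j, hj⟩) (by simpa using hij)
  simpa using this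

lemma getD_mem {L : List ℕ} {i : ℕ} (hi : i < L.length) : L.getD i 0 ∈ L := by
  rw [List.getD_eq_getElem _ _ hi]
  exact List.getElem_mem hi

lemma getD_set' {L : List ℕ} {s r a : ℕ} (hr : r < L.length) :
    (L.set s a).getD r 0 = if s = r then a else L.getD r 0 := by
  rw [List.getD_eq_getElem _ _ (by simpa using hr), List.getElem_set]
  split
  · rfl
  · rw [List.getD_eq_getElem _ _ hr]

lemma mem_iff_getD {L : List ℕ} {x : ℕ} :
    x ∈ L ↔ ∃ i, i < L.length ∧ L.getD i 0 = x := by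
  rw [List.mem_iff_getElem]
  constructor
  · rintro ⟨i, hi, h⟩
    exact ⟨i, hi, by rwa [List.getD_eq_getElem _ _ hi]⟩
  · rintro ⟨i, hi, h⟩
    exact ⟨i, hi, by rwa [List.getD_eq_getElem _ _ hi] at h⟩

-- The cover lemma
lemma cover_step (A B : Finset ℕ) (hcard : A.card = B.card) (hA : ∀ x ∈ A, 1 ≤ x)
    (hmaj : SetMaj A B) (hne : A ≠ B) :
    ∃ b ∈ B, 2 ≤ b ∧ b - 1 ∉ B ∧ SetMaj A (insert (b - 1) (B.erase b)) := by
  classical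
  obtain ⟨L, hLdef⟩ : ∃ L, B.sort (· ≤ ·) = L := ⟨_, rfl⟩
  obtain ⟨M, hMdef⟩ : ∃ M, A.sort (· ≤ ·) = M := ⟨_, rfl⟩
  have hmaj' : ∀ r, M.getD r 0 ≤ L.getD r 0 := by
    intro r
    have := hmaj r
    rwa [hLdef, hMdef] at this
  have lenL : L.length = B.card := by rw [← hLdef]; exact Finset.length_sort _
  have lenM : M.length = B.card := by rw [← hMdef, Finset.length_sort, hcard]
  have hLlt : L.Pairwise (· < ·) := hLdef ▸ (Finset.sortedLT_sort B).pairwise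
  have hMlt : M.Pairwise (· < ·) := hMdef ▸ (Finset.sortedLT_sort A).pairwise
  have hLB : ∀ {x : ℕ}, x ∈ L ↔ x ∈ B := fun {x} => hLdef ▸ Finset.mem_sort _
  have hMA : ∀ {x : ℕ}, x ∈ M ↔ x ∈ A := fun {x} => hMdef ▸ Finset.mem_sort _
  have hex : ∃ r, r < L.length ∧ M.getD r 0 < L.getD r 0 := by
    by_contra hcon
    push_neg at hcon
    apply hne
    have hML : M = L := by
      apply List.ext_getElem (by omega)
      intro r h1 h2
      have e1 := hmaj' r
      have e2 := hcon r h2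
      rw [List.getD_eq_getElem _ _ h1, List.getD_eq_getElem _ _ h2] at e1 e2
      omega
    have h1 : A = M.toFinset := by rw [← hMdef, Finset.sort_toFinset]
    rw [h1, hML, ← hLdef, Finset.sort_toFinset]
  have find : ∀ s, s < L.length → M.getD s 0 < L.getD s 0 →
      ∃ t, t < L.length ∧ M.getD t 0 < L.getD t 0 ∧ (L.getD t 0) - 1 ∉ B := by
    intro s
    induction s using Nat.strong_induction_on with
    | _ s IH =>
      intro hs hlt
      by_cases hmem : (L.getD s 0) - 1 ∈ B
      · obtain ⟨t', ht', hteq⟩ := mem_iff_getD.1 (hLB.2 hmem)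
        have htlt : t' < s := by
          by_contra hge
          push_neg at hge
          rcases Nat.eq_or_lt_of_le hge with h | h
          · rw [← h] at hteq; omega
          · have := sorted_lt_getD hLlt h ht'; omega
        have hs1 : 1 ≤ s := by omega
        have h1 : L.getD t' 0 ≤ L.getD (s-1) 0 := sorted_le_getD (hLlt.imp le_of_lt) (by omega) (by omega)
        have h2 : L.getD (s-1) 0 < L.getD s 0 := sorted_lt_getD hLlt (by omega) hs
        have h4 : M.getD (s-1) 0 < M.getD s 0 := sorted_lt_getD hMlt (by omega) (by omega)
        exact IH (s-1) (by omega) (by omega) (by omega)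
      · exact ⟨s, hs, hlt, hmem⟩
  obtain ⟨r0, hr0, hr0lt⟩ := hex
  obtain ⟨s, hs, hlt, hout⟩ := find r0 hr0 hr0lt
  have hβB : L.getD s 0 ∈ B := hLB.1 (getD_mem hs)
  have hMpos : 1 ≤ M.getD s 0 := by
    rw [List.getD_eq_getElem _ _ (by omega : s < M.length)]
    exact hA _ (hMA.1 (List.getElem_mem (by omega)))
  have hβ2 : 2 ≤ L.getD s 0 := by omega
  refine ⟨L.getD s 0, hβB, hβ2, hout, ?_⟩
  have lenL' : (L.set s (L.getD s 0 - 1)).length = L.length := List.length_set ..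
  have hL'lt : (L.set s (L.getD s 0 - 1)).Pairwise (· < ·) := by
    rw [List.pairwise_iff_getElem]
    intro i j hi hj hij
    rw [lenL'] at hi hj
    rw [← List.getD_eq_getElem _ 0 (by omega : i < (L.set s (L.getD s 0 - 1)).length),
      ← List.getD_eq_getElem _ 0 (by omega : j < (L.set s (L.getD s 0 - 1)).length),
      getD_set' hi, getD_set' hj]
    have hLij : L.getD i 0 < L.getD j 0 := sorted_lt_getD hLlt hij hj
    by_cases his : s = i
    · rw [if_pos his, if_neg (by omega : ¬ s = j)]
      have hsj : L.getD s 0 < L.getD j 0 := sorted_lt_getD hLlt (by omega) hj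
      omega
    · by_cases hjs : s = j
      · have hne' : L.getD i 0 ≠ L.getD s 0 - 1 := fun hcon => hout (hcon ▸ hLB.1 (getD_mem hi))
        have his' : L.getD i 0 < L.getD s 0 := sorted_lt_getD hLlt (by omega) hs
        rw [if_neg his, if_pos hjs]
        omega
      · rw [if_neg his, if_neg hjs]
        exact hLij
  have htf : (L.set s (L.getD s 0 - 1)).toFinset = insert (L.getD s 0 - 1) (B.erase (L.getD s 0)) := by
    ext x
    rw [List.mem_toFinset, Finset.mem_insert, Finset.mem_erase, mem_iff_getD]
    constructor
    · rintro ⟨i, hi, hieq⟩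
      rw [lenL'] at hi
      rw [getD_set' hi] at hieq
      by_cases his : s = i
      · rw [if_pos his] at hieq; exact Or.inl hieq.symm
      · rw [if_neg his] at hieq
        refine Or.inr ⟨?_, hieq ▸ hLB.1 (getD_mem hi)⟩
        intro hcon
        rcases Nat.lt_or_ge i s with h | h
        · have := sorted_lt_getD hLlt h hs; omega
        · have h' : s < i := by omega
          have := sorted_lt_getD hLlt h' hi; omega
    · rintro (rfl | ⟨hxne, hxB⟩)
      · exact ⟨s, by omega, by rw [getD_set' hs, if_pos rfl]⟩
      · obtain ⟨i, hi, hieq⟩ := mem_iff_getD.1 (hLB.2 hxB)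
        refine ⟨i, by omega, ?_⟩
        rw [getD_set' hi, if_neg (fun hcon => hxne (by rw [← hieq, ← hcon]))]
        exact hieq
  have hsortC : (insert (L.getD s 0 - 1) (B.erase (L.getD s 0))).sort (· ≤ ·)
      = L.set s (L.getD s 0 - 1) := by
    rw [← htf]
    exact (List.toFinset_sort (· ≤ ·) hL'lt.nodup).2 (hL'lt.imp le_of_lt)
  intro r
  rw [hsortC, hMdef]
  rcases Nat.lt_or_ge r L.length with hr | hr
  · rw [getD_set' hr]
    by_cases hrs : s = r
    · rw [if_pos hrs, ← hrs]
      omega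
    · rw [if_neg hrs]
      exact hmaj' r
  · rw [List.getD_eq_default _ _ (by omega : M.length ≤ r)]
    omega

-- performing a swap inside one family of a tuple
lemma do_swap {m k : ℕ} {n : Fin k → ℕ} (R : Fin k → Finset (Finset ℕ))
    (hR : ∀ j, IsSetFamily m (n j) (R j)) (l : Fin k) (C : Finset ℕ) (a b : ℕ)
    (hC : C ∈ R l) (hbC : b ∈ C) (haC : a ∉ C) (ha1 : 1 ≤ a)
    (hC' : insert a (C.erase b) ∉ R l) :
    ∃ R' : Fin k → Finset (Finset ℕ), (∀ j, IsSetFamily m (n j) (R' j)) ∧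
      tupMult R' a = tupMult R a + 1 ∧ tupMult R' b + 1 = tupMult R b ∧
      (∀ x, x ≠ a → x ≠ b → tupMult R' x = tupMult R x) ∧
      (∑ j, ∑ S ∈ R' j, ∑ x ∈ S, x) + b = (∑ j, ∑ S ∈ R j, ∑ x ∈ S, x) + a := by
  classical
  have hab : a ≠ b := fun h => haC (h ▸ hbC)
  refine ⟨Function.update R l (insert (insert a (C.erase b)) ((R l).erase C)), ?_, ?_, ?_, ?_, ?_⟩
  · intro j
    rcases eq_or_ne j l with h | h
    · subst h
      rw [Function.update_self]
      constructor
      · rw [card_swapped hC hC']; exact (hR j).1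
      · intro S hS
        rcases mem_swapped hS with h | h
        · subst h
          refine ⟨by rw [card_swapC hbC haC]; exact ((hR j).2 C hC).1, ?_⟩
          intro x hx
          rcases Finset.mem_insert.1 hx with h' | h'
          · omega
          · exact ((hR j).2 C hC).2 x (Finset.mem_of_mem_erase h')
        · exact (hR j).2 S h
    · rw [Function.update_of_ne h]; exact hR j
  · have h1 := tupMult_update R l (insert (insert a (C.erase b)) ((R l).erase C)) a
    have h2 := famMult_swapped hC hC' a
    rw [if_neg haC, if_pos (Finset.mem_insert_self a _)] at h2
    omega
  · have h1 := tupMult_update R l (insert (insert a (C.erase b)) ((R l).erase C)) b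
    have h2 := famMult_swapped hC hC' b
    rw [if_pos hbC, if_neg (by
      intro hcon
      rcases Finset.mem_insert.1 hcon with h' | h'
      · exact hab h'.symm
      · exact Finset.notMem_erase _ _ h')] at h2
    omega
  · intro x hxa hxb
    have h1 := tupMult_update R l (insert (insert a (C.erase b)) ((R l).erase C)) x
    have h2 := famMult_swapped hC hC' x
    have hiff : (x ∈ insert a (C.erase b)) ↔ (x ∈ C) := by
      rw [Finset.mem_insert, Finset.mem_erase]
      constructor
      · rintro (h | h)
        · exact absurd h hxa
        · exact h.2
      · intro h; exact Or.inr ⟨hxb, h⟩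
    rw [if_congr hiff rfl rfl] at h2
    omega
  · have h1 := weight_update R l (insert (insert a (C.erase b)) ((R l).erase C))
    have h2 := sum_swapped hC hC'
    have h3 := sum_swapC hbC haC
    omega

-- a non-closed family admits a single-decrement violation
lemma violation {m nn : ℕ} {Q : Finset (Finset ℕ)} (hQ : IsSetFamily m nn Q)
    (hnc : ¬ ClosedFam m Q) :
    ∃ B ∈ Q, ∃ b ∈ B, 2 ≤ b ∧ b - 1 ∉ B ∧ insert (b - 1) (B.erase b) ∉ Q := by
  classical
  rw [ClosedFam] at hnc
  push_neg at hnc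
  obtain ⟨B0, hB0, A0, hA0card, hA0pos, hmaj0, hA0not⟩ := hnc
  suffices h : ∀ N B, B ∈ Q → (∑ x ∈ B, x) ≤ N →
      ∀ A : Finset ℕ, A.card = m → (∀ x ∈ A, 1 ≤ x) → SetMaj A B → A ∉ Q →
      ∃ B' ∈ Q, ∃ b ∈ B', 2 ≤ b ∧ b - 1 ∉ B' ∧ insert (b - 1) (B'.erase b) ∉ Q by
    exact h (∑ x ∈ B0, x) B0 hB0 le_rfl A0 hA0card hA0pos hmaj0 hA0not
  intro N
  induction N using Nat.strong_induction_on with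
  | _ N IH =>
    intro B hB hsum A hAcard hApos hmajAB hAnot
    have hAB : A ≠ B := fun h => hAnot (h ▸ hB)
    have hcardAB : A.card = B.card := by rw [hAcard, (hQ.2 B hB).1]
    obtain ⟨b, hbB, hb2, hbout, hmajC⟩ := cover_step A B hcardAB hApos hmajAB hAB
    by_cases hCmem : insert (b-1) (B.erase b) ∈ Q
    · have hsumC : (∑ x ∈ insert (b-1) (B.erase b), x) + b = (∑ x ∈ B, x) + (b-1) :=
        sum_swapC hbB hbout
      have hbsum : b ≤ ∑ x ∈ B, x :=
        Finset.single_le_sum (f := fun x => x) (fun x _ => Nat.zero_le x) hbB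
      exact IH (∑ x ∈ insert (b-1) (B.erase b), x) (by omega) _ hCmem le_rfl A
        hAcard hApos hmajC hAnot
    · exact ⟨B, hB, b, hbB, hb2, hbout, hCmem⟩

-- the straightening loop
lemma loop {m k : ℕ} {n : Fin k → ℕ} {f : ℕ → ℕ} (hf : TypeDefined f)
    {Nf : ℕ} (hNf : ∀ x, Nf ≤ x → f x = 0) :
    ∀ W (R : Fin k → Finset (Finset ℕ)), (∀ j, IsSetFamily m (n j) (R j)) →
      (∑ l, ∑ S ∈ R l, ∑ x ∈ S, x) ≤ W →
      ∀ p q, 1 ≤ p → p < q → tupMult R p = f p + 1 → tupMult R q + 1 = f q →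
      (∀ x, x ≠ p → x ≠ q → tupMult R x = f x) →
      ∃ R' : Fin k → Finset (Finset ℕ), (∀ j, IsSetFamily m (n j) (R' j)) ∧
        TypeDefined (tupMult R') ∧ ConjStrictDom (tupMult R') f := by
  intro W
  induction W using Nat.strong_induction_on with
  | _ W IH =>
    intro R hR hW p q hp hpq hgp hgq hoth
    by_cases hmono : ∀ i, 1 ≤ i → tupMult R (i+1) ≤ tupMult R i
    · refine ⟨R, hR, typeDefined_of_step hmono, ?_, p, hp, by omega⟩
      obtain ⟨Ng, hNg⟩ := tup_support R
      exact partSum_move_le hf hNf hNg hp hpq hgp hgq hoth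
    · push_neg at hmono
      obtain ⟨i, hi1, hilt⟩ := hmono
      have hcase : i + 1 = p ∨ i = q := by
        by_contra hcon
        push_neg at hcon
        obtain ⟨hc1, hc2⟩ := hcon
        have hstep : f (i+1) ≤ f i := hf i (i+1) hi1 (by omega)
        have e2 : tupMult R (i+1) ≤ f (i+1) := by
          rcases eq_or_ne (i+1) q with h | h
          · subst h; omega
          · rw [hoth (i+1) hc1 h]
        have e1 : f i ≤ tupMult R i := by
          rcases eq_or_ne i p with h | h
          · subst h; omega
          · rw [hoth i h hc2]
        omega
      obtain ⟨l, C, hC, hmemC, hniC, hC'⟩ := exists_swap_mult R i hilt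
      obtain ⟨R', hR', hmi, hmi1, hmo, hwt⟩ :=
        do_swap R hR l C i (i+1) hC hmemC hniC hi1 hC'
      have hwlt : (∑ j, ∑ S ∈ R' j, ∑ x ∈ S, x) < W := by omega
      rcases hcase with h | h
      · -- left repair: new pattern (i, q)
        subst h
        refine IH _ hwlt R' hR' le_rfl i q hi1 (by omega) ?_ ?_ ?_
        · rw [hmi, hoth i (by omega) (by omega)]
        · rw [hmo q (by omega) (by omega)]; exact hgq
        · intro x hx1 hx2
          rcases eq_or_ne x (i+1) with h' | h'
          · subst h'; omega
          · rw [hmo x hx1 h']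
            exact hoth x h' hx2
      · -- right repair: new pattern (p, i+1)
        subst h
        refine IH _ hwlt R' hR' le_rfl p (i+1) hp (by omega) ?_ ?_ ?_
        · rw [hmo p (by omega) (by omega)]; exact hgp
        · rw [hmi1]
          exact hoth (i+1) (by omega) (by omega)
        · intro x hx1 hx2
          rcases eq_or_ne x i with h' | h'
          · subst h'; omega
          · rw [hmo x h' hx2]
            exact hoth x hx1 h'

/-- Every minimal set family tuple is closed. -/
theorem stmt_1 (m k : ℕ) (n : Fin k → ℕ) (P : Fin k → Finset (Finset ℕ))
    (hP : ∀ j, IsSetFamily m (n j) (P j))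
    (htype : TypeDefined (tupMult P))
    (hmin : ¬ ∃ R : Fin k → Finset (Finset ℕ),
      (∀ j, IsSetFamily m (n j) (R j)) ∧ TypeDefined (tupMult R) ∧
        ConjStrictDom (tupMult R) (tupMult P)) :
    ∀ j, ClosedFam m (P j) := by
  intro j
  by_contra hnc
  obtain ⟨B, hB, b, hbB, hb2, hbout, hCout⟩ := violation (hP j) hnc
  obtain ⟨R0, hR0, hm1, hm2, hm3, _⟩ := do_swap P hP j B (b-1) b hB hbB hbout (by omega) hCout
  obtain ⟨Nf, hNf⟩ := tup_support P
  obtain ⟨R', h1, h2, h3⟩ := loop htype hNf (∑ l, ∑ S ∈ R0 l, ∑ x ∈ S, x) R0 hR0 le_rfl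
    (b-1) b (by omega) (by omega) hm1 hm2 hm3
  exact hmin ⟨R', h1, h2, h3⟩
end

section
/- If (P_1,…,P_k) is a minimal set family tuple with each P_j of shape (m^{n_j}), then each individual set family P_j is minimal; that is, P_j has a defined type λ^{(j)} and no set family of shape (m^{n_j}) has a defined type strictly dominated by λ^{(j)}. -/
/-! ### Auxiliary lemmas -/

open Finset

lemma sf2_partSum_eq_sum {f : ℕ → ℕ} {N : ℕ} (hs : ∀ x, x ∉ Finset.Icc 1 N → f x = 0) (t : ℕ) :
    partSum f t = ∑ x ∈ Finset.Icc 1 N, min (f x) t := by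
  apply finsum_eq_finset_sum_of_support_subset
  intro x hx
  simp only [Function.mem_support] at hx
  by_contra hxn
  simp [hs x hxn] at hx

/-- Double counting with a cap `w x ≤ t`. -/
lemma sf2_sum_min_eq {G : Finset ℕ} {u w : ℕ → ℕ} {t : ℕ} (hw : ∀ x ∈ G, w x ≤ t) :
    ∑ x ∈ G, min (u x) (w x)
      = ∑ s ∈ Finset.Icc 1 t, (G.filter (fun x => s ≤ u x ∧ s ≤ w x)).card := by
  have h1 : ∀ x ∈ G, min (u x) (w x)
      = ((Finset.Icc 1 t).filter (fun s => s ≤ u x ∧ s ≤ w x)).card := by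
    intro x hx
    have : (Finset.Icc 1 t).filter (fun s => s ≤ u x ∧ s ≤ w x)
        = Finset.Icc 1 (min (u x) (w x)) := by
      ext s; simp only [mem_filter, Finset.mem_Icc]
      have := hw x hx; omega
    rw [this, Nat.card_Icc]; omega
  rw [Finset.sum_congr rfl h1]
  simp only [Finset.card_filter]
  exact Finset.sum_comm

lemma sf2_downclosed_mem_iff {S : Finset ℕ} (h1 : ∀ x ∈ S, 1 ≤ x)
    (hdc : ∀ a b : ℕ, 1 ≤ a → a ≤ b → b ∈ S → a ∈ S) (s : ℕ) :
    s ∈ S ↔ 1 ≤ s ∧ s ≤ S.card := by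
  constructor
  · intro hsS
    refine ⟨h1 s hsS, ?_⟩
    have hsub : Finset.Icc 1 s ⊆ S := fun a ha => by
      rw [Finset.mem_Icc] at ha; exact hdc a s ha.1 ha.2 hsS
    have := Finset.card_le_card hsub
    simpa [Nat.card_Icc] using this
  · rintro ⟨hs1, hsc⟩
    by_contra hns
    have hsub : S ⊆ Finset.Icc 1 (s - 1) := by
      intro x hxS
      rw [Finset.mem_Icc]
      refine ⟨h1 x hxS, ?_⟩
      by_contra hb
      exact hns (hdc s x hs1 (by omega) hxS)
    have := Finset.card_le_card hsub
    rw [Nat.card_Icc] at this; omega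

lemma sf2_filter_eq_Icc {u : ℕ → ℕ} {N : ℕ} (hu : TypeDefined u) (s : ℕ) :
    (Finset.Icc 1 N).filter (fun x => s ≤ u x)
      = Finset.Icc 1 ((Finset.Icc 1 N).filter (fun x => s ≤ u x)).card := by
  have h1 : ∀ x ∈ (Finset.Icc 1 N).filter (fun x => s ≤ u x), 1 ≤ x := by
    intro x hx; rw [mem_filter, Finset.mem_Icc] at hx; exact hx.1.1
  have hdc : ∀ a b : ℕ, 1 ≤ a → a ≤ b →
      b ∈ (Finset.Icc 1 N).filter (fun x => s ≤ u x) →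
      a ∈ (Finset.Icc 1 N).filter (fun x => s ≤ u x) := by
    intro a b ha hab hb
    rw [mem_filter, Finset.mem_Icc] at hb ⊢
    exact ⟨⟨ha, le_trans hab hb.1.2⟩, le_trans hb.2 (hu a b ha hab)⟩
  ext x
  rw [sf2_downclosed_mem_iff h1 hdc x, Finset.mem_Icc]

/-- The conjugate-partition counting function (with ambient bound `N`). -/
def sf2_lam (N : ℕ) (u : ℕ → ℕ) (s : ℕ) : ℕ :=
  ((Finset.Icc 1 N).filter (fun x => s ≤ u x)).card

lemma sf2_lam_sum_eq {N : ℕ} (u : ℕ → ℕ) (p : ℕ) :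
    ∑ s ∈ Finset.Icc 1 p, sf2_lam N u s = ∑ x ∈ Finset.Icc 1 N, min (u x) p := by
  rw [sf2_sum_min_eq (w := fun _ => p) (t := p) (fun x _ => le_rfl)]
  apply Finset.sum_congr rfl
  intro s hs
  rw [Finset.mem_Icc] at hs
  unfold sf2_lam
  congr 1
  apply Finset.filter_congr
  intro x _
  exact ⟨fun h => ⟨h, hs.2⟩, fun h => h.1⟩

lemma sf2_decomp {N : ℕ} {g h : ℕ → ℕ} (hg : TypeDefined g) (hh : TypeDefined h) (t : ℕ) :
    ∑ x ∈ Finset.Icc 1 N, min (g x + h x) t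
      = ∑ x ∈ Finset.Icc 1 N, min (h x) t
        + ∑ s ∈ Finset.Icc 1 t, (sf2_lam N g s - sf2_lam N h (t + 1 - s)) := by
  have e1 : ∀ x ∈ Finset.Icc 1 N,
      min (g x + h x) t = min (h x) t + min (g x) (t - min (h x) t) := by
    intro x _; omega
  rw [Finset.sum_congr rfl e1, Finset.sum_add_distrib]
  congr 1
  rw [sf2_sum_min_eq (w := fun x => t - min (h x) t) (t := t) (fun x _ => by omega)]
  apply Finset.sum_congr rfl
  intro s hs
  rw [Finset.mem_Icc] at hs
  have efil : (Finset.Icc 1 N).filter (fun x => s ≤ g x ∧ s ≤ t - min (h x) t)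
      = ((Finset.Icc 1 N).filter (fun x => s ≤ g x))
        \ ((Finset.Icc 1 N).filter (fun x => t + 1 - s ≤ h x)) := by
    ext x
    simp only [mem_filter, Finset.mem_sdiff, Finset.mem_Icc]
    have hs1 := hs.1
    have hs2 := hs.2
    omega
  have hIcc : Finset.Icc 1 (sf2_lam N g s) \ Finset.Icc 1 (sf2_lam N h (t+1-s))
      = Finset.Icc (sf2_lam N h (t+1-s) + 1) (sf2_lam N g s) := by
    ext x; simp only [Finset.mem_sdiff, Finset.mem_Icc]; omega
  rw [efil,
    show ((Finset.Icc 1 N).filter (fun x => s ≤ g x)) = Finset.Icc 1 (sf2_lam N g s) from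
      sf2_filter_eq_Icc hg s,
    show ((Finset.Icc 1 N).filter (fun x => t + 1 - s ≤ h x))
        = Finset.Icc 1 (sf2_lam N h (t+1-s)) from
      sf2_filter_eq_Icc hh (t+1-s),
    hIcc, Nat.card_Icc]
  omega

lemma sf2_lemmaK {t : ℕ} {A B C : ℕ → ℕ}
    (hA : ∀ s s' : ℕ, 1 ≤ s → s ≤ s' → A s' ≤ A s)
    (hC : ∀ s s' : ℕ, 1 ≤ s → s ≤ s' → C s ≤ C s')
    (hAB : ∀ p, p ≤ t → ∑ s ∈ Finset.Icc 1 p, A s ≤ ∑ s ∈ Finset.Icc 1 p, B s) :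
    ∑ s ∈ Finset.Icc 1 t, (A s - C s) ≤ ∑ s ∈ Finset.Icc 1 t, (B s - C s) := by
  set S := (Finset.Icc 1 t).filter (fun s => C s < A s) with hS
  have hmem : ∀ s, s ∈ S ↔ 1 ≤ s ∧ s ≤ S.card := by
    apply sf2_downclosed_mem_iff
    · intro x hx; rw [hS, mem_filter, Finset.mem_Icc] at hx; exact hx.1.1
    · intro a b ha hab hb
      rw [hS, mem_filter, Finset.mem_Icc] at hb ⊢
      exact ⟨⟨ha, le_trans hab hb.1.2⟩,
        lt_of_le_of_lt (hC a b ha hab) (lt_of_lt_of_le hb.2 (hA a b ha hab))⟩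
  set p := S.card with hp
  have hpt : p ≤ t := by
    have := Finset.card_le_card (Finset.filter_subset (fun s => C s < A s) (Finset.Icc 1 t))
    rw [← hS] at this; simpa [Nat.card_Icc] using this
  have hsplit : ∀ D : ℕ → ℕ, ∑ s ∈ Finset.Icc 1 t, D s
      = ∑ s ∈ Finset.Icc 1 p, D s + ∑ s ∈ Finset.Ioc p t, D s := by
    intro D
    have hq : ∀ q : ℕ, Finset.Icc 1 q = Finset.Ioc 0 q := by
      intro q; ext x; simp only [Finset.mem_Icc, Finset.mem_Ioc]; omega
    rw [hq, hq]
    exact (Finset.sum_Ioc_consecutive _ (Nat.zero_le p) hpt).symm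
  have hzero : ∀ s ∈ Finset.Ioc p t, A s - C s = 0 := by
    intro s hs
    rw [Finset.mem_Ioc] at hs
    have : s ∉ S := fun hmem' => by rw [hmem] at hmem'; omega
    rw [hS, mem_filter, Finset.mem_Icc] at this
    push_neg at this
    have := this ⟨by omega, hs.2⟩
    omega
  have hCA : ∀ s ∈ Finset.Icc 1 p, C s ≤ A s := by
    intro s hs
    rw [Finset.mem_Icc] at hs
    have : s ∈ S := by rw [hmem]; exact hs
    rw [hS, mem_filter] at this
    exact le_of_lt this.2
  rw [hsplit (fun s => A s - C s), hsplit (fun s => B s - C s)]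
  have h0 : ∑ s ∈ Finset.Ioc p t, (A s - C s) = 0 := Finset.sum_eq_zero hzero
  have e1 : ∑ s ∈ Finset.Icc 1 p, (A s - C s) + ∑ s ∈ Finset.Icc 1 p, C s
      = ∑ s ∈ Finset.Icc 1 p, A s := by
    rw [← Finset.sum_add_distrib]
    exact Finset.sum_congr rfl (fun s hs => by have := hCA s hs; omega)
  have e2 : ∑ s ∈ Finset.Icc 1 p, B s
      ≤ ∑ s ∈ Finset.Icc 1 p, (B s - C s) + ∑ s ∈ Finset.Icc 1 p, C s := by
    rw [← Finset.sum_add_distrib]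
    exact Finset.sum_le_sum (fun s _ => by omega)
  have := hAB p hpt
  omega

lemma sf2_lam_antitone {N : ℕ} (u : ℕ → ℕ) {s s' : ℕ} (h : s ≤ s') :
    sf2_lam N u s' ≤ sf2_lam N u s := by
  apply Finset.card_le_card
  intro x hx
  rw [mem_filter] at hx ⊢
  exact ⟨hx.1, le_trans h hx.2⟩

/-- Replacing a weakly-decreasing summand by a dominance-smaller weakly-decreasing one
yields a dominance-smaller sum. -/
lemma sf2_pS_add_le {N : ℕ} {f g h : ℕ → ℕ}
    (hsf : ∀ x, x ∉ Finset.Icc 1 N → f x = 0)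
    (hsg : ∀ x, x ∉ Finset.Icc 1 N → g x = 0)
    (hsh : ∀ x, x ∉ Finset.Icc 1 N → h x = 0)
    (hf : TypeDefined f) (hg : TypeDefined g) (hh : TypeDefined h)
    (hdom : ∀ p, partSum g p ≤ partSum f p) (t : ℕ) :
    partSum (fun x => g x + h x) t ≤ partSum (fun x => f x + h x) t := by
  rw [sf2_partSum_eq_sum (N := N) (fun x hx => by rw [hsg x hx, hsh x hx]) t,
      sf2_partSum_eq_sum (N := N) (fun x hx => by rw [hsf x hx, hsh x hx]) t]
  rw [sf2_decomp hg hh t, sf2_decomp hf hh t]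
  have key : ∑ s ∈ Finset.Icc 1 t, (sf2_lam N g s - sf2_lam N h (t + 1 - s))
      ≤ ∑ s ∈ Finset.Icc 1 t, (sf2_lam N f s - sf2_lam N h (t + 1 - s)) := by
    apply sf2_lemmaK
    · intro s s' _ hss'; exact sf2_lam_antitone g hss'
    · intro s s' h1 hss'; exact sf2_lam_antitone h (by omega)
    · intro p _
      rw [sf2_lam_sum_eq g p, sf2_lam_sum_eq f p,
        ← sf2_partSum_eq_sum (N := N) hsg p, ← sf2_partSum_eq_sum (N := N) hsf p]
      exact hdom p
  omega

lemma sf2_perm_fix_symm {ρ : Equiv.Perm ℕ} {N : ℕ}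
    (hfix : ∀ x, x ∉ Finset.Icc 1 N → ρ x = x) :
    ∀ x, x ∉ Finset.Icc 1 N → ρ.symm x = x := by
  intro x hx
  have := hfix x hx
  calc ρ.symm x = ρ.symm (ρ x) := by rw [this]
  _ = x := ρ.symm_apply_apply x

lemma sf2_perm_mem_Icc {ρ : Equiv.Perm ℕ} {N : ℕ}
    (hfix : ∀ x, x ∉ Finset.Icc 1 N → ρ x = x) (x : ℕ) :
    x ∈ Finset.Icc 1 N ↔ ρ x ∈ Finset.Icc 1 N := by
  constructor
  · intro hx
    by_contra hnx
    have h1 := hfix (ρ x) hnx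
    have := ρ.injective h1
    rw [← this] at hx
    exact hnx hx
  · intro hx
    by_contra hnx
    rw [hfix x hnx] at hx
    exact hnx hx

lemma sf2_partSum_perm {f : ℕ → ℕ} {N : ℕ} (hs : ∀ x, x ∉ Finset.Icc 1 N → f x = 0)
    {ρ : Equiv.Perm ℕ} (hfix : ∀ x, x ∉ Finset.Icc 1 N → ρ x = x) (t : ℕ) :
    partSum (fun x => f (ρ x)) t = partSum f t := by
  rw [sf2_partSum_eq_sum (N := N) (fun x hx => by rw [hfix x hx]; exact hs x hx) t,
      sf2_partSum_eq_sum (N := N) hs t]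
  exact Finset.sum_equiv ρ (fun i => sf2_perm_mem_Icc hfix i) (fun i _ => rfl)

lemma sf2_famMult_image (ρ : Equiv.Perm ℕ) (Q : Finset (Finset ℕ)) (x : ℕ) :
    famMult (Q.image (fun S => S.image ρ)) x = famMult Q (ρ.symm x) := by
  unfold famMult
  have himg : (Q.image (fun S => S.image ρ)).filter (fun S => x ∈ S)
      = (Q.filter (fun S => ρ.symm x ∈ S)).image (fun S => S.image ρ) := by
    ext T
    simp only [mem_filter, Finset.mem_image]
    constructor
    · rintro ⟨⟨S, hSQ, rfl⟩, hxT⟩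
      refine ⟨S, ⟨hSQ, ?_⟩, rfl⟩
      rw [Finset.mem_image] at hxT
      obtain ⟨y, hyS, hyx⟩ := hxT
      rwa [show ρ.symm x = y from by rw [← hyx]; exact ρ.symm_apply_apply y]
    · rintro ⟨S, ⟨hSQ, hxS⟩, rfl⟩
      refine ⟨⟨S, hSQ, rfl⟩, ?_⟩
      rw [Finset.mem_image]
      exact ⟨ρ.symm x, hxS, ρ.apply_symm_apply x⟩
  rw [himg]
  apply Finset.card_image_of_injective
  intro S T hST
  have := congrArg (Finset.image (⇑ρ.symm)) hST
  simpa [Finset.image_image, Function.comp_def] using this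

lemma sf2_isSetFamily_image {m n : ℕ} {Q : Finset (Finset ℕ)} (hQ : IsSetFamily m n Q)
    (ρ : Equiv.Perm ℕ) (hpos : ∀ x : ℕ, 1 ≤ x → 1 ≤ ρ x) :
    IsSetFamily m n (Q.image (fun S => S.image ρ)) := by
  obtain ⟨hcard, hsets⟩ := hQ
  have hinj : Function.Injective (fun S : Finset ℕ => S.image ρ) := by
    intro S T hST
    have := congrArg (Finset.image (⇑ρ.symm)) hST
    simpa [Finset.image_image, Function.comp_def] using this
  constructor
  · rw [Finset.card_image_of_injective _ hinj, hcard]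
  · intro T hT
    rw [Finset.mem_image] at hT
    obtain ⟨S, hSQ, rfl⟩ := hT
    obtain ⟨hScard, hSpos⟩ := hsets S hSQ
    constructor
    · rw [Finset.card_image_of_injective _ ρ.injective, hScard]
    · intro x hx
      rw [Finset.mem_image] at hx
      obtain ⟨y, hyS, rfl⟩ := hx
      exact hpos y (hSpos y hyS)

/-- The order isomorphism between `Fin N` and the interval `[1, N]`. -/
def sf2_iccEquiv (N : ℕ) : Fin N ≃ {x : ℕ // x ∈ Finset.Icc 1 N} where
  toFun k := ⟨k.val + 1, by rw [Finset.mem_Icc]; omega⟩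
  invFun x := ⟨x.val - 1, by have := x.2; rw [Finset.mem_Icc] at this; omega⟩
  left_inv k := by simp
  right_inv x := by
    have := x.2; rw [Finset.mem_Icc] at this
    apply Subtype.ext; simp; omega

/-- There is a permutation of the positive integers, supported on `[1, N]`, sorting a
given function into weakly decreasing order there. -/
lemma sf2_exists_sort_perm (N : ℕ) (f : ℕ → ℕ) :
    ∃ ρ : Equiv.Perm ℕ, (∀ x, x ∉ Finset.Icc 1 N → ρ x = x) ∧
      (∀ i j : ℕ, 1 ≤ i → i ≤ j → j ≤ N → f (ρ j) ≤ f (ρ i)) := by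
  classical
  set w : Fin N → ℕ := fun k => f (k.val + 1) with hw
  set π : Equiv.Perm (Fin N) := (Fin.revPerm.trans (Tuple.sort w)) with hπ
  have hanti : ∀ a b : Fin N, a ≤ b → w (π b) ≤ w (π a) := by
    intro a b hab
    have hmono := Tuple.monotone_sort w
    have : Fin.revPerm b ≤ Fin.revPerm a := by
      simp only [Fin.revPerm_apply]
      exact Fin.rev_le_rev.mpr hab
    exact hmono this
  set ρ : Equiv.Perm ℕ := π.extendDomain (sf2_iccEquiv N) with hρ
  refine ⟨ρ, ?_, ?_⟩
  · intro x hx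
    exact Equiv.Perm.extendDomain_apply_not_subtype π (sf2_iccEquiv N) hx
  · intro i j h1 hij hjN
    have hiN : i ∈ Finset.Icc 1 N := by rw [Finset.mem_Icc]; omega
    have hjN' : j ∈ Finset.Icc 1 N := by rw [Finset.mem_Icc]; omega
    have happ : ∀ x (hx : x ∈ Finset.Icc 1 N),
        ρ x = (π ((sf2_iccEquiv N).symm ⟨x, hx⟩)).val + 1 := by
      intro x hx
      rw [hρ, Equiv.Perm.extendDomain_apply_subtype π (sf2_iccEquiv N) hx]
      rfl
    rw [happ i hiN, happ j hjN']
    have : (sf2_iccEquiv N).symm ⟨i, hiN⟩ ≤ (sf2_iccEquiv N).symm ⟨j, hjN'⟩ := by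
      show (⟨i - 1, _⟩ : Fin N) ≤ ⟨j - 1, _⟩
      simp [Fin.le_def]; omega
    exact hanti _ _ this

lemma sf2_famMult_supp {m n : ℕ} {Q : Finset (Finset ℕ)} (hQ : IsSetFamily m n Q) {N : ℕ}
    (hN : Q.sup (fun S => S.sup id) ≤ N) :
    ∀ x, x ∉ Finset.Icc 1 N → famMult Q x = 0 := by
  intro x hx
  unfold famMult
  rw [Finset.card_eq_zero, Finset.filter_eq_empty_iff]
  intro S hS hxS
  apply hx
  rw [Finset.mem_Icc]
  refine ⟨(hQ.2 S hS).2 x hxS, ?_⟩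
  calc x = id x := rfl
  _ ≤ S.sup id := Finset.le_sup hxS
  _ ≤ Q.sup (fun S => S.sup id) := Finset.le_sup (f := fun S => S.sup id) hS
  _ ≤ N := hN

/-- Moving weight from a lower-multiplicity position onto a higher-multiplicity one strictly
decreases the dominance partial sums. -/
lemma sf2_perturb {N : ℕ} {u v : ℕ → ℕ} {i i' δ : ℕ} (hne : i ≠ i')
    (hi : i ∈ Finset.Icc 1 N) (hi' : i' ∈ Finset.Icc 1 N)
    (hui : u i = v i + δ) (hui' : u i' + δ = v i')
    (hoff : ∀ x, x ≠ i → x ≠ i' → u x = v x)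
    (hvv : v i' ≤ v i) (hδ : 1 ≤ δ)
    (hsu : ∀ x, x ∉ Finset.Icc 1 N → u x = 0) (hsv : ∀ x, x ∉ Finset.Icc 1 N → v x = 0) :
    (∀ t, partSum u t ≤ partSum v t) ∧ partSum u (v i') < partSum v (v i') := by
  have hi'e : i' ∈ (Finset.Icc 1 N).erase i := Finset.mem_erase.mpr ⟨Ne.symm hne, hi'⟩
  have hsum : ∀ (w : ℕ → ℕ) (t : ℕ), ∑ x ∈ Finset.Icc 1 N, min (w x) t
      = min (w i) t + (min (w i') t
          + ∑ x ∈ ((Finset.Icc 1 N).erase i).erase i', min (w x) t) := by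
    intro w t
    rw [← Finset.add_sum_erase _ (fun x => min (w x) t) hi,
        ← Finset.add_sum_erase _ (fun x => min (w x) t) hi'e]
  have hrest : ∀ t, ∑ x ∈ ((Finset.Icc 1 N).erase i).erase i', min (u x) t
      = ∑ x ∈ ((Finset.Icc 1 N).erase i).erase i', min (v x) t := by
    intro t
    apply Finset.sum_congr rfl
    intro x hx
    rw [Finset.mem_erase, Finset.mem_erase] at hx
    rw [hoff x hx.2.1 hx.1]
  constructor
  · intro t
    rw [sf2_partSum_eq_sum hsu t, sf2_partSum_eq_sum hsv t, hsum u t, hsum v t, hrest t]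
    omega
  · rw [sf2_partSum_eq_sum hsu (v i'), sf2_partSum_eq_sum hsv (v i'), hsum u (v i'),
      hsum v (v i'), hrest (v i')]
    omega

/-- In a minimal set family tuple, each individual set family has a defined
type and is itself minimal. -/
theorem stmt_2 (m k : ℕ) (n : Fin k → ℕ) (P : Fin k → Finset (Finset ℕ))
    (hP : ∀ j, IsSetFamily m (n j) (P j))
    (htype : TypeDefined (tupMult P))
    (hmin : ¬ ∃ R : Fin k → Finset (Finset ℕ),
      (∀ j, IsSetFamily m (n j) (R j)) ∧ TypeDefined (tupMult R) ∧
        ConjStrictDom (tupMult R) (tupMult P)) :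
    ∀ j, TypeDefined (famMult (P j)) ∧
      ¬ ∃ R : Finset (Finset ℕ), IsSetFamily m (n j) R ∧ TypeDefined (famMult R) ∧
          ConjStrictDom (famMult R) (famMult (P j)) := by
  classical
  set NP := Finset.univ.sup (fun j : Fin k => (P j).sup (fun S => S.sup id)) with hNPdef
  have hsuppP : ∀ (j : Fin k) (x : ℕ), x ∉ Finset.Icc 1 NP → famMult (P j) x = 0 := by
    intro j
    exact sf2_famMult_supp (hP j)
      (Finset.le_sup (f := fun j : Fin k => (P j).sup fun S => S.sup id) (Finset.mem_univ j))
  have hsupTot : ∀ x, x ∉ Finset.Icc 1 NP → tupMult P x = 0 := by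
    intro x hx
    exact Finset.sum_eq_zero (fun j _ => hsuppP j x hx)
  -- Part 1 : each component has a defined type
  have part1 : ∀ j0 : Fin k, TypeDefined (famMult (P j0)) := by
    intro j0
    by_contra hnot
    unfold TypeDefined at hnot
    push_neg at hnot
    obtain ⟨i, i', h1i, hii', hlt⟩ := hnot
    have hne : i ≠ i' := by rintro rfl; omega
    set Q : Fin k → Finset (Finset ℕ) :=
      fun j => if j = j0 then (P j0).image (fun S => S.image (Equiv.swap i i')) else P j with hQ
    have hi'mem : i' ∈ Finset.Icc 1 NP := by
      by_contra hq
      have := hsuppP j0 i' hq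
      omega
    have himem : i ∈ Finset.Icc 1 NP := by
      rw [Finset.mem_Icc] at hi'mem ⊢; omega
    have hτpos : ∀ x : ℕ, 1 ≤ x → 1 ≤ Equiv.swap i i' x := by
      intro x hx
      rcases eq_or_ne x i with rfl | hxi
      · rw [Equiv.swap_apply_left]; omega
      · rcases eq_or_ne x i' with rfl | hxi'
        · rw [Equiv.swap_apply_right]; exact h1i
        · rw [Equiv.swap_apply_of_ne_of_ne hxi hxi']; exact hx
    have hQfam : ∀ j, IsSetFamily m (n j) (Q j) := by
      intro j
      by_cases hj : j = j0
      · subst hj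
        simp only [hQ, if_pos rfl]
        exact sf2_isSetFamily_image (hP j) (Equiv.swap i i') hτpos
      · simp only [hQ, if_neg hj]
        exact hP j
    have hQmult : ∀ (j : Fin k) (x : ℕ), famMult (Q j) x
        = if j = j0 then famMult (P j0) (Equiv.swap i i' x) else famMult (P j) x := by
      intro j x
      by_cases hj : j = j0
      · subst hj
        simp only [hQ, if_pos rfl]
        rw [sf2_famMult_image, Equiv.symm_swap]
        simp
      · simp only [hQ, if_neg hj]
    have key : ∀ x, tupMult Q x + famMult (P j0) x
        = tupMult P x + famMult (P j0) (Equiv.swap i i' x) := by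
      intro x
      have e1 := Finset.add_sum_erase Finset.univ (fun j => famMult (Q j) x) (Finset.mem_univ j0)
      have e2 := Finset.add_sum_erase Finset.univ (fun j => famMult (P j) x) (Finset.mem_univ j0)
      beta_reduce at e1 e2
      have h1 : famMult (Q j0) x = famMult (P j0) (Equiv.swap i i' x) := by
        rw [hQmult, if_pos rfl]
      have h2 : ∑ j ∈ Finset.univ.erase j0, famMult (Q j) x
          = ∑ j ∈ Finset.univ.erase j0, famMult (P j) x := by
        apply Finset.sum_congr rfl
        intro j hj
        rw [hQmult, if_neg (Finset.mem_erase.mp hj).1]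
      unfold tupMult
      rw [← e1, ← e2, h1, h2]
      ring
    have hkeyi := key i
    rw [Equiv.swap_apply_left] at hkeyi
    have hkeyi' := key i'
    rw [Equiv.swap_apply_right] at hkeyi'
    have hui : tupMult Q i = tupMult P i + (famMult (P j0) i' - famMult (P j0) i) := by
      omega
    have hui' : tupMult Q i' + (famMult (P j0) i' - famMult (P j0) i) = tupMult P i' := by
      omega
    have huoff : ∀ x, x ≠ i → x ≠ i' → tupMult Q x = tupMult P x := by
      intro x hxi hxi'
      have hk := key x
      rw [Equiv.swap_apply_of_ne_of_ne hxi hxi'] at hk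
      omega
    have hsupQ : ∀ x, x ∉ Finset.Icc 1 NP → tupMult Q x = 0 := by
      intro x hx
      have hxi : x ≠ i := fun h => hx (h ▸ himem)
      have hxi' : x ≠ i' := fun h => hx (h ▸ hi'mem)
      rw [huoff x hxi hxi']
      exact hsupTot x hx
    obtain ⟨hdomQ, hstrict⟩ := sf2_perturb hne himem hi'mem hui hui' huoff
      (htype i i' h1i hii') (by omega) hsupQ hsupTot
    obtain ⟨ρ, hfix, hanti⟩ := sf2_exists_sort_perm NP (tupMult Q)
    have hfix' : ∀ x, x ∉ Finset.Icc 1 NP → ρ.symm x = x := sf2_perm_fix_symm hfix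
    set R : Fin k → Finset (Finset ℕ) :=
      fun j => (Q j).image (fun S => S.image ρ.symm) with hR
    have hRmult : ∀ x, tupMult R x = tupMult Q (ρ x) := by
      intro x
      unfold tupMult
      apply Finset.sum_congr rfl
      intro j _
      simp only [hR]
      rw [sf2_famMult_image, Equiv.symm_symm]
    have hρpos : ∀ x : ℕ, 1 ≤ x → 1 ≤ ρ.symm x := by
      intro x hx
      by_cases hmem : x ∈ Finset.Icc 1 NP
      · have := (sf2_perm_mem_Icc hfix' x).mp hmem
        rw [Finset.mem_Icc] at this; omega
      · rw [hfix' x hmem]; exact hx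
    have hRfam : ∀ j, IsSetFamily m (n j) (R j) := by
      intro j
      simp only [hR]
      exact sf2_isSetFamily_image (hQfam j) ρ.symm hρpos
    have hRtype : TypeDefined (tupMult R) := by
      intro a b h1a hab
      rw [hRmult a, hRmult b]
      by_cases hbN : b ≤ NP
      · exact hanti a b h1a hab hbN
      · have hbni : b ∉ Finset.Icc 1 NP := by rw [Finset.mem_Icc]; omega
        rw [hfix b hbni, hsupQ b hbni]
        exact Nat.zero_le _
    have hpseq : ∀ t, partSum (tupMult R) t = partSum (tupMult Q) t := by
      intro t
      have hfun : tupMult R = fun x => tupMult Q (ρ x) := funext hRmult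
      rw [hfun]
      exact sf2_partSum_perm hsupQ hfix t
    have hRdom : ConjDom (tupMult R) (tupMult P) := by
      intro t
      rw [hpseq t]
      exact hdomQ t
    have hRne : ∃ x : ℕ, 1 ≤ x ∧ tupMult R x ≠ tupMult P x := by
      by_contra hno
      push_neg at hno
      have hall : ∀ x, tupMult R x = tupMult P x := by
        intro x
        rcases Nat.eq_zero_or_pos x with rfl | hx
        · have h0 : (0 : ℕ) ∉ Finset.Icc 1 NP := by simp
          rw [hRmult 0, hfix 0 h0, hsupQ 0 h0, hsupTot 0 h0]
        · exact hno x hx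
      have heq : partSum (tupMult R) (tupMult P i') = partSum (tupMult P) (tupMult P i') :=
        finsum_congr (fun x => by rw [hall x])
      have := hpseq (tupMult P i')
      omega
    exact hmin ⟨R, hRfam, hRtype, hRdom, hRne⟩
  -- Part 2 : each component is minimal
  intro j0
  refine ⟨part1 j0, ?_⟩
  rintro ⟨Rf, hRffam, hRftype, hRfdom, x0, hx01, hx0ne⟩
  set N := max NP (Rf.sup (fun S => S.sup id)) with hNdef
  have hsupP' : ∀ (j : Fin k) (x : ℕ), x ∉ Finset.Icc 1 N → famMult (P j) x = 0 := by
    intro j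
    apply sf2_famMult_supp (hP j)
    have h1 : ((P j).sup fun S => S.sup id) ≤ NP :=
      Finset.le_sup (f := fun j : Fin k => (P j).sup fun S => S.sup id) (Finset.mem_univ j)
    have h2 : NP ≤ N := by rw [hNdef]; exact le_max_left _ _
    omega
  have hsupRf : ∀ x, x ∉ Finset.Icc 1 N → famMult Rf x = 0 :=
    sf2_famMult_supp hRffam (by rw [hNdef]; exact le_max_right _ _)
  set h : ℕ → ℕ := fun x => ∑ j ∈ Finset.univ.erase j0, famMult (P j) x with hhdef
  have hsuph : ∀ x, x ∉ Finset.Icc 1 N → h x = 0 := fun x hx =>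
    Finset.sum_eq_zero (fun j _ => hsupP' j x hx)
  have hhtype : TypeDefined h := by
    intro a b h1a hab
    exact Finset.sum_le_sum (fun j _ => part1 j a b h1a hab)
  have hPt : ∀ x, tupMult P x = famMult (P j0) x + h x := by
    intro x
    have e2 := Finset.add_sum_erase Finset.univ (fun j => famMult (P j) x) (Finset.mem_univ j0)
    beta_reduce at e2
    unfold tupMult
    rw [← e2]
  set Rt : Fin k → Finset (Finset ℕ) := fun j => if j = j0 then Rf else P j with hRtdef
  have hRtfam : ∀ j, IsSetFamily m (n j) (Rt j) := by
    intro j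
    by_cases hj : j = j0
    · subst hj; simp only [hRtdef, if_pos rfl]; exact hRffam
    · simp only [hRtdef, if_neg hj]; exact hP j
  have hRtm : ∀ x, tupMult Rt x = famMult Rf x + h x := by
    intro x
    have e1 := Finset.add_sum_erase Finset.univ (fun j => famMult (Rt j) x) (Finset.mem_univ j0)
    beta_reduce at e1
    unfold tupMult
    rw [← e1]
    congr 1
    · simp only [hRtdef, if_pos rfl]
    · apply Finset.sum_congr rfl
      intro j hj
      simp only [hRtdef, if_neg (Finset.mem_erase.mp hj).1]
  have hRttype : TypeDefined (tupMult Rt) := by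
    intro a b h1a hab
    rw [hRtm a, hRtm b]
    exact Nat.add_le_add (hRftype a b h1a hab) (hhtype a b h1a hab)
  apply hmin
  refine ⟨Rt, hRtfam, hRttype, ?_, x0, hx01, ?_⟩
  · intro t
    have hfunR : tupMult Rt = fun x => famMult Rf x + h x := funext hRtm
    have hfunP : tupMult P = fun x => famMult (P j0) x + h x := funext hPt
    rw [hfunR, hfunP]
    exact sf2_pS_add_le (hsupP' j0) hsupRf hsuph (part1 j0) hRftype hhtype hRfdom t
  · rw [hRtm x0, hPt x0]
    exact fun hcontra => hx0ne (by omega)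
end

section
/- Every minimal multiset family tuple is closed: if (Q_1,…,Q_k) is a multiset family tuple with defined type λ, each Q_j of shape (m^{n_j}), and there is no multiset family tuple (R_1,…,R_k) with each R_j of shape (m^{n_j}) whose type is defined and strictly dominated by λ, then every Q_j is closed. -/
/-- The multiplicity of `i` in a multiset family `Q`: the total number of occurrences of `i`,
counted with multiplicity, among the multisets in `Q`. -/
def msetMult (Q : Finset (Multiset ℕ)) (i : ℕ) : ℕ := ∑ S ∈ Q, S.count i

/-- `Q` is a multiset family of shape `(m^n)`: a collection of `n` distinct multisets of
cardinality `m` with elements in the positive integers. -/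
def IsMsetFamily (m n : ℕ) (Q : Finset (Multiset ℕ)) : Prop :=
  Q.card = n ∧ ∀ S ∈ Q, Multiset.card S = m ∧ ∀ x ∈ S, 1 ≤ x

/-- `B` majorizes `A` (written `A ⪯ B`) for multisets: the `r`-th smallest element of `A`
is at most the `r`-th smallest element of `B`. -/
def MsetMaj (A B : Multiset ℕ) : Prop :=
  ∀ r : ℕ, (A.sort (· ≤ ·)).getD r 0 ≤ (B.sort (· ≤ ·)).getD r 0

/-- A multiset family (of cardinality-`m` multisets) is closed if it is downward closed
under majorization. -/
def ClosedMsetFam (m : ℕ) (Q : Finset (Multiset ℕ)) : Prop :=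
  ∀ B ∈ Q, ∀ A : Multiset ℕ, Multiset.card A = m → (∀ x ∈ A, 1 ≤ x) → MsetMaj A B → A ∈ Q

/-- The total multiplicity of `i` over a tuple of multiset families. -/
def msetTupMult {k : ℕ} (Q : Fin k → Finset (Multiset ℕ)) (i : ℕ) : ℕ := ∑ j, msetMult (Q j) i
/-! ### Auxiliary: single down-move on a multiset -/

def st3mv (x : ℕ) (S : Multiset ℕ) : Multiset ℕ := x ::ₘ S.erase (x+1)

lemma st3mv_count {x : ℕ} {S : Multiset ℕ} (h : (x+1) ∈ S) (y : ℕ) :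
    (st3mv x S).count y + (if y = x+1 then 1 else 0) = S.count y + (if y = x then 1 else 0) := by
  have h1 : 0 < S.count (x+1) := Multiset.count_pos.mpr h
  unfold st3mv
  rw [Multiset.count_cons]
  by_cases hy : y = x+1
  · subst hy
    rw [Multiset.count_erase_self]
    have hne : ¬ (x+1 = x) := by omega
    simp only [if_pos rfl, if_neg hne]
    simp
    omega
  · rw [Multiset.count_erase_of_ne hy]
    simp [hy]

lemma st3mv_card {x : ℕ} {S : Multiset ℕ} (h : (x+1) ∈ S) :
    Multiset.card (st3mv x S) = Multiset.card S := by
  have h1 : 0 < Multiset.card S := Multiset.card_pos_iff_exists_mem.mpr ⟨_, h⟩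
  unfold st3mv
  rw [Multiset.card_cons, Multiset.card_erase_of_mem h, Nat.pred_eq_sub_one]
  omega

lemma st3mv_sum {x : ℕ} {S : Multiset ℕ} (h : (x+1) ∈ S) :
    (st3mv x S).sum + 1 = S.sum := by
  conv_rhs => rw [← Multiset.cons_erase h]
  unfold st3mv
  rw [Multiset.sum_cons, Multiset.sum_cons]
  omega

lemma st3mv_pos {x : ℕ} {S : Multiset ℕ} (hx : 1 ≤ x) (hpos : ∀ y ∈ S, 1 ≤ y) :
    ∀ y ∈ st3mv x S, 1 ≤ y := by
  intro y hy
  rcases Multiset.mem_cons.mp hy with h | h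
  · omega
  · exact hpos y (Multiset.mem_of_mem_erase h)

lemma st3mv_filter {x : ℕ} {S : Multiset ℕ} (t : ℕ) (h : (x+1) ∈ S) :
    Multiset.card ((st3mv x S).filter (fun a => t < a)) ≤
      Multiset.card (S.filter (fun a => t < a)) := by
  conv_rhs => rw [← Multiset.cons_erase h]
  unfold st3mv
  rw [Multiset.filter_cons, Multiset.filter_cons, Multiset.card_add, Multiset.card_add]
  have : Multiset.card (if t < x then ({x} : Multiset ℕ) else 0)
      ≤ Multiset.card (if t < x+1 then ({x+1} : Multiset ℕ) else 0) := by
    by_cases h1 : t < x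
    · have h2 : t < x + 1 := by omega
      simp [h1, h2]
    · by_cases h2 : t < x + 1 <;> simp [h1, h2]
  omega

/-! ### Counting: no violations implies weakly decreasing multiplicity -/

/-! ### Counting: no violations implies weakly decreasing multiplicity -/

def st3Phi (x kk : ℕ) (S : Multiset ℕ) : Multiset ℕ :=
  (S - Multiset.replicate kk (x+1)) + Multiset.replicate kk x

lemma st3Phi_count (x kk : ℕ) (S : Multiset ℕ) (y : ℕ) :
    (st3Phi x kk S).count y
      = S.count y - (if x+1 = y then kk else 0) + (if x = y then kk else 0) := by
  unfold st3Phi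
  rw [Multiset.count_add, Multiset.count_sub, Multiset.count_replicate, Multiset.count_replicate]

lemma st3Phi_zero (x : ℕ) (S : Multiset ℕ) : st3Phi x 0 S = S := by
  simp [st3Phi]

lemma st3Phi_mem_succ {x kk : ℕ} {S : Multiset ℕ} (h : kk + 1 ≤ S.count (x+1)) :
    (x+1) ∈ st3Phi x kk S := by
  rw [← Multiset.count_pos, st3Phi_count]
  have h1 : ¬ (x = x + 1) := by omega
  simp [h1]
  omega

lemma st3Phi_succ {x kk : ℕ} {S : Multiset ℕ} (h : kk + 1 ≤ S.count (x+1)) :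
    st3Phi x (kk+1) S = st3mv x (st3Phi x kk S) := by
  have hmem := st3Phi_mem_succ h
  apply Multiset.ext.mpr
  intro y
  have hc := st3mv_count hmem y
  rw [st3Phi_count] at hc
  rw [st3Phi_count]
  by_cases h1 : y = x + 1
  · subst h1
    have h2 : ¬ (x = x+1) := by omega
    simp [h2] at hc ⊢
    omega
  · by_cases h2 : y = x
    · simp [h2, h1, show ¬ (x+1 = x) from by omega] at hc ⊢
      omega
    · have h3 : ¬ (x + 1 = y) := by omega
      have h4 : ¬ (x = y) := fun hc' => h2 hc'.symm
      simp [h1, h2, h3, h4] at hc ⊢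
      omega

lemma st3Phi_mem_fam {x : ℕ} {S : Multiset ℕ} {F : Finset (Multiset ℕ)}
    (hcl : ∀ T ∈ F, ∀ z, 1 ≤ z → (z+1) ∈ T → st3mv z T ∈ F)
    (hx : 1 ≤ x) (hS : S ∈ F) :
    ∀ kk, kk ≤ S.count (x+1) → st3Phi x kk S ∈ F := by
  intro kk
  induction kk with
  | zero => intro _; rw [st3Phi_zero]; exact hS
  | succ kk ih =>
    intro hle
    rw [st3Phi_succ hle]
    exact hcl _ (ih (by omega)) x hx (st3Phi_mem_succ hle)

lemma st3_mult_anti (F : Finset (Multiset ℕ))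
    (hcl : ∀ T ∈ F, ∀ z, 1 ≤ z → (z+1) ∈ T → st3mv z T ∈ F)
    (x : ℕ) (hx : 1 ≤ x) : msetMult F (x+1) ≤ msetMult F x := by
  classical
  unfold msetMult
  have h1 : ∑ S ∈ F, S.count (x+1)
      = (F.sigma (fun S => Finset.range (S.count (x+1)))).card := by
    rw [Finset.card_sigma]; simp
  have h2 : ∑ S ∈ F, S.count x
      = (F.sigma (fun S => Finset.range (S.count x))).card := by
    rw [Finset.card_sigma]; simp
  rw [h1, h2]
  apply Finset.card_le_card_of_injOn
    (fun p : Σ _ : Multiset ℕ, ℕ => (⟨st3Phi x (p.2+1) p.1, p.2⟩ : Σ _ : Multiset ℕ, ℕ))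
  · rintro ⟨S, i⟩ hp
    rw [Finset.mem_coe, Finset.mem_sigma, Finset.mem_range] at hp
    dsimp only at hp ⊢
    rw [Finset.mem_coe, Finset.mem_sigma, Finset.mem_range]
    refine ⟨st3Phi_mem_fam hcl hx hp.1 (i+1) (by omega), ?_⟩
    rw [st3Phi_count]
    have h3 : ¬ (x + 1 = x) := by omega
    simp [h3]
    omega
  · rintro ⟨S, i⟩ hp ⟨S', i'⟩ hp' heq
    simp only [Finset.coe_sigma, Set.mem_sigma_iff, Finset.mem_coe, Finset.mem_range] at hp hp'
    dsimp only at hp hp' heq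
    have hi : i = i' := congrArg (fun p : Σ _ : Multiset ℕ, ℕ => p.2) heq
    have hPhi : st3Phi x (i+1) S = st3Phi x (i'+1) S' :=
      congrArg (fun p : Σ _ : Multiset ℕ, ℕ => p.1) heq
    subst hi
    have hb : i + 1 ≤ S.count (x+1) := hp.2
    have hb' : i + 1 ≤ S'.count (x+1) := hp'.2
    have hSS : S = S' := by
      apply Multiset.ext.mpr
      intro y
      have hcy := congrArg (fun M : Multiset ℕ => Multiset.count y M) hPhi
      simp only [st3Phi_count] at hcy
      by_cases hy1 : x + 1 = y
      · subst hy1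
        have hy2 : ¬ (x = x+1) := by omega
        simp [hy2] at hcy
        omega
      · by_cases hy2 : x = y
        · subst hy2
          simp [hy1] at hcy
          omega
        · simp [hy1, hy2] at hcy
          omega
    subst hSS
    rfl

/-! ### Closedness from absence of single-step violations -/

lemma st3_step_down (m : ℕ) {A B : Multiset ℕ} (hAB : A ≠ B)
    (hAcard : Multiset.card A = m) (hBcard : Multiset.card B = m)
    (hApos : ∀ x ∈ A, 1 ≤ x)
    (hmaj : MsetMaj A B) :
    ∃ b : ℕ, 2 ≤ b ∧ b ∈ B ∧ MsetMaj A ((b-1) ::ₘ B.erase b) := by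
  classical
  set la := A.sort (· ≤ ·) with hla
  set lb := B.sort (· ≤ ·) with hlbdef
  have hlaA : (la : Multiset ℕ) = A := Multiset.sort_eq _ _
  have hlbB : (lb : Multiset ℕ) = B := Multiset.sort_eq _ _
  have hlal : la.length = m := by rw [hla, Multiset.length_sort, hAcard]
  have hlbl : lb.length = m := by rw [hlbdef, Multiset.length_sort, hBcard]
  have hsa : la.Pairwise (· ≤ ·) := Multiset.pairwise_sort _ _
  have hsb : lb.Pairwise (· ≤ ·) := Multiset.pairwise_sort _ _
  have hsa' := List.pairwise_iff_getElem.mp hsa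
  have hsb' := List.pairwise_iff_getElem.mp hsb
  have hex : ∃ r, la.getD r 0 ≠ lb.getD r 0 := by
    by_contra hc
    push_neg at hc
    apply hAB
    rw [← hlaA, ← hlbB]
    congr 1
    apply List.ext_getElem (by rw [hlal, hlbl])
    intro i h1 h2
    have := hc i
    rwa [List.getD_eq_getElem la 0 h1, List.getD_eq_getElem lb 0 h2] at this
  have hrne : la.getD (Nat.find hex) 0 ≠ lb.getD (Nat.find hex) 0 := Nat.find_spec hex
  set r := Nat.find hex with hrdef
  have hrmin : ∀ i, i < r → la.getD i 0 = lb.getD i 0 := by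
    intro i hi
    have := Nat.find_min hex hi
    push_neg at this
    exact this
  have hrm : r < m := by
    by_contra hge
    push_neg at hge
    apply hrne
    rw [List.getD_eq_default la 0 (by omega), List.getD_eq_default lb 0 (by omega)]
  have hrla : r < la.length := by omega
  have hrlb : r < lb.length := by omega
  have hab : la[r]'hrla < lb[r]'hrlb := by
    have h1 := hmaj r
    rw [List.getD_eq_getElem la 0 hrla, List.getD_eq_getElem lb 0 hrlb] at h1
    have h2 : la[r]'hrla ≠ lb[r]'hrlb := by
      intro hcc
      apply hrne
      rw [List.getD_eq_getElem la 0 hrla, List.getD_eq_getElem lb 0 hrlb, hcc]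
    omega
  have ha1 : 1 ≤ la[r]'hrla := by
    apply hApos
    rw [← hlaA]
    exact Multiset.mem_coe.mpr (List.getElem_mem hrla)
  set b := lb[r]'hrlb with hbdef
  have hb2 : 2 ≤ b := by omega
  have hbB : b ∈ B := by
    rw [← hlbB]
    exact Multiset.mem_coe.mpr (List.getElem_mem hrlb)
  refine ⟨b, hb2, hbB, ?_⟩
  set lb' := lb.set r (b-1) with hlb'def
  have hlb'len : lb'.length = m := by rw [hlb'def, List.length_set, hlbl]
  have hsorted' : lb'.Pairwise (· ≤ ·) := by
    apply List.pairwise_iff_getElem.mpr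
    intro i j hi hj hij
    have hi2 : i < lb.length := by
      have := hi; rw [hlb'def, List.length_set] at this; exact this
    have hj2 : j < lb.length := by
      have := hj; rw [hlb'def, List.length_set] at this; exact this
    have hgi : lb'[i]'hi = if r = i then b - 1 else lb[i]'hi2 := List.getElem_set hi
    have hgj : lb'[j]'hj = if r = j then b - 1 else lb[j]'hj2 := List.getElem_set hj
    rw [hgi, hgj]
    by_cases h1 : r = i
    · subst h1
      rw [if_pos rfl, if_neg (by omega)]
      have := hsb' r j hrlb hj2 hij
      rw [← hbdef] at this
      omega
    · rw [if_neg h1]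
      by_cases h2 : r = j
      · subst h2
        rw [if_pos rfl]
        have hir : i < r := by omega
        have hila : i < la.length := by omega
        have heqi : la[i]'hila = lb[i]'hi2 := by
          have := hrmin i hir
          rwa [List.getD_eq_getElem la 0 hila, List.getD_eq_getElem lb 0 hi2] at this
        have hle : la[i]'hila ≤ la[r]'hrla := hsa' i r hila hrla hir
        omega
      · rw [if_neg h2]
        exact hsb' i j hi2 hj2 hij
  have hdec : lb.take r ++ b :: lb.drop (r+1) = lb := by
    conv_rhs => rw [← List.take_append_drop r lb]
    rw [List.drop_eq_getElem_cons hrlb]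
  have hset : lb' = lb.take r ++ (b-1) :: lb.drop (r+1) := by
    rw [hlb'def]
    conv_lhs => rw [← hdec]
    rw [List.set_append]
    have hlt : ¬ (r < (lb.take r).length) := by
      rw [List.length_take]
      omega
    rw [if_neg hlt]
    have : r - (lb.take r).length = 0 := by rw [List.length_take]; omega
    rw [this]
    rfl
  have key : b ::ₘ (lb' : Multiset ℕ) = (b-1) ::ₘ (lb : Multiset ℕ) := by
    conv_rhs => rw [← hdec]
    rw [hset]
    apply Multiset.ext.mpr
    intro y
    have e1 : ∀ (c : ℕ), Multiset.count y ((lb.take r ++ c :: lb.drop (r+1) : List ℕ) : Multiset ℕ)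
        = Multiset.count y ((lb.take r : List ℕ) : Multiset ℕ)
          + Multiset.count y ((lb.drop (r+1) : List ℕ) : Multiset ℕ)
          + (if y = c then 1 else 0) := by
      intro c
      have : ((lb.take r ++ c :: lb.drop (r+1) : List ℕ) : Multiset ℕ)
          = ((lb.take r : List ℕ) : Multiset ℕ) + (c ::ₘ ((lb.drop (r+1) : List ℕ) : Multiset ℕ)) := rfl
      rw [this, Multiset.count_add, Multiset.count_cons]
      omega
    rw [Multiset.count_cons, Multiset.count_cons, e1, e1]
    by_cases h1 : y = b <;> by_cases h2 : y = b - 1 <;> simp [h1, h2] <;> omega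
  have hperm : ((lb' : List ℕ) : Multiset ℕ) = (b-1) ::ₘ B.erase b := by
    have h2 : b ::ₘ ((b-1) ::ₘ B.erase b) = b ::ₘ ((lb' : List ℕ) : Multiset ℕ) := by
      rw [Multiset.cons_swap, Multiset.cons_erase hbB, key, hlbB]
    exact ((Multiset.cons_inj_right b).mp h2).symm
  have hsortB' : ((b-1) ::ₘ B.erase b).sort (· ≤ ·) = lb' := by
    apply List.Perm.eq_of_pairwise' (Multiset.pairwise_sort _ _) hsorted' ?_
    rw [← Multiset.coe_eq_coe, Multiset.sort_eq, hperm]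
  intro r'
  rw [hsortB']
  by_cases hr' : r' < m
  · have h1 : r' < la.length := by omega
    have h2 : r' < lb'.length := by omega
    have h3 : r' < lb.length := by omega
    rw [List.getD_eq_getElem la 0 h1, List.getD_eq_getElem lb' 0 h2]
    have hg : lb'[r']'h2 = if r = r' then b - 1 else lb[r']'h3 := List.getElem_set h2
    rw [hg]
    by_cases h : r = r'
    · subst h
      rw [if_pos rfl]
      omega
    · rw [if_neg h]
      have := hmaj r'
      rwa [List.getD_eq_getElem la 0 h1, List.getD_eq_getElem lb 0 h3] at this
  · rw [List.getD_eq_default la 0 (by omega)]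
    exact Nat.zero_le _

lemma st3_closed (m : ℕ) (F : Finset (Multiset ℕ))
    (hF : ∀ S ∈ F, Multiset.card S = m ∧ ∀ x ∈ S, 1 ≤ x)
    (hcl : ∀ T ∈ F, ∀ z, 1 ≤ z → (z+1) ∈ T → st3mv z T ∈ F) :
    ClosedMsetFam m F := by
  have main : ∀ N : ℕ, ∀ B ∈ F, ∀ A : Multiset ℕ, B.sum ≤ N → Multiset.card A = m →
      (∀ x ∈ A, 1 ≤ x) → MsetMaj A B → A ∈ F := by
    intro N
    induction N with
    | zero =>
      intro B hB A hBsum hAcard hApos hmaj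
      by_cases hAB : A = B
      · exact hAB ▸ hB
      · exfalso
        obtain ⟨b, hb2, hbB, _⟩ := st3_step_down m hAB hAcard (hF B hB).1 hApos hmaj
        have : b ≤ B.sum := Multiset.single_le_sum (fun y _ => Nat.zero_le y) b hbB
        omega
    | succ N ih =>
      intro B hB A hBsum hAcard hApos hmaj
      by_cases hAB : A = B
      · exact hAB ▸ hB
      · obtain ⟨b, hb2, hbB, hmaj'⟩ := st3_step_down m hAB hAcard (hF B hB).1 hApos hmaj
        have hb1 : b - 1 + 1 = b := by omega
        have hbB' : (b - 1) + 1 ∈ B := by rw [hb1]; exact hbB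
        have hB' : st3mv (b-1) B ∈ F := hcl B hB (b-1) (by omega) hbB'
        have hmv : st3mv (b-1) B = (b-1) ::ₘ B.erase b := by
          unfold st3mv
          rw [hb1]
        have hsum : (st3mv (b-1) B).sum + 1 = B.sum := st3mv_sum hbB'
        have hsum2 : (st3mv (b-1) B).sum + 1 = B.sum := by
          rw [hmv] at hsum ⊢
          exact hsum
        exact ih (st3mv (b-1) B) hB' A (by omega) hAcard hApos (by rw [hmv]; exact hmaj')
  intro B hB A hAcard hApos hmaj
  exact main B.sum B hB A le_rfl hAcard hApos hmaj

/-! ### Tuple-level compression -/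

def st3totM {k : ℕ} (R : Fin k → Finset (Multiset ℕ)) : ℕ := ∑ j, ∑ S ∈ R j, S.sum

def st3tl {k : ℕ} (t : ℕ) (R : Fin k → Finset (Multiset ℕ)) : ℕ :=
  ∑ j, ∑ S ∈ R j, Multiset.card (S.filter (fun a => t < a))

def st3NoViol {k : ℕ} (R : Fin k → Finset (Multiset ℕ)) : Prop :=
  ∀ j, ∀ S ∈ R j, ∀ x, 1 ≤ x → (x+1) ∈ S → st3mv x S ∈ R j

lemma st3_update_sum {k : ℕ} (R : Fin k → Finset (Multiset ℕ)) (l : Fin k)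
    (S W : Multiset ℕ) (hS : S ∈ R l) (hW : W ∉ R l) (φ : Multiset ℕ → ℕ) :
    (∑ j, ∑ T ∈ (Function.update R l (insert W ((R l).erase S))) j, φ T) + φ S
      = (∑ j, ∑ T ∈ R j, φ T) + φ W := by
  classical
  have hsplit : ∀ G : Fin k → ℕ, ∑ j, G j = G l + ∑ j ∈ Finset.univ.erase l, G j :=
    fun G => (Finset.add_sum_erase _ _ (Finset.mem_univ l)).symm
  rw [hsplit (fun j => ∑ T ∈ (Function.update R l (insert W ((R l).erase S))) j, φ T),
    hsplit (fun j => ∑ T ∈ R j, φ T)]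
  have hoff : (∑ j ∈ Finset.univ.erase l,
        ∑ T ∈ (Function.update R l (insert W ((R l).erase S))) j, φ T)
      = ∑ j ∈ Finset.univ.erase l, ∑ T ∈ R j, φ T := by
    apply Finset.sum_congr rfl
    intro j hj
    rw [Function.update_of_ne (Finset.ne_of_mem_erase hj)]
  rw [hoff, Function.update_self]
  rw [Finset.sum_insert (fun hc => hW (Finset.mem_of_mem_erase hc))]
  have hkey := Finset.add_sum_erase (R l) φ hS
  omega

lemma st3_step {k : ℕ} (m : ℕ) (n : Fin k → ℕ) (R : Fin k → Finset (Multiset ℕ))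
    (hshape : ∀ j, IsMsetFamily m (n j) (R j)) (h : ¬ st3NoViol R) :
    ∃ R', (∀ j, IsMsetFamily m (n j) (R' j)) ∧ st3totM R' < st3totM R ∧
      ∀ t, st3tl t R' ≤ st3tl t R := by
  classical
  unfold st3NoViol at h
  push_neg at h
  obtain ⟨l, S, hS, x, hx1, hxS, hW⟩ := h
  refine ⟨Function.update R l (insert (st3mv x S) ((R l).erase S)), ?_, ?_, ?_⟩
  · intro j
    by_cases hj : j = l
    · subst hj
      rw [Function.update_self]
      constructor
      · rw [Finset.card_insert_of_notMem (fun hc => hW (Finset.mem_of_mem_erase hc)),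
          Finset.card_erase_of_mem hS]
        have h1 : 0 < (R j).card := Finset.card_pos.mpr ⟨S, hS⟩
        have h2 := (hshape j).1
        omega
      · intro T hT
        rcases Finset.mem_insert.mp hT with hT | hT
        · subst hT
          exact ⟨by rw [st3mv_card hxS]; exact ((hshape j).2 S hS).1,
                 st3mv_pos hx1 ((hshape j).2 S hS).2⟩
        · exact (hshape j).2 T (Finset.mem_of_mem_erase hT)
    · rw [Function.update_of_ne hj]
      exact hshape j
  · have hkey := st3_update_sum R l S (st3mv x S) hS hW Multiset.sum
    have hsum := st3mv_sum hxS
    unfold st3totM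
    omega
  · intro t
    have hkey := st3_update_sum R l S (st3mv x S) hS hW
      (fun T => Multiset.card (T.filter (fun a => t < a)))
    have hfil := st3mv_filter t hxS
    unfold st3tl
    omega

lemma st3_compress {k : ℕ} (m : ℕ) (n : Fin k → ℕ) :
    ∀ N (R : Fin k → Finset (Multiset ℕ)), st3totM R ≤ N →
    (∀ j, IsMsetFamily m (n j) (R j)) →
    ∃ R', (∀ j, IsMsetFamily m (n j) (R' j)) ∧ st3NoViol R' ∧ st3totM R' ≤ st3totM R ∧
      ∀ t, st3tl t R' ≤ st3tl t R := by
  intro N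
  induction N with
  | zero =>
    intro R hN hshape
    by_cases hv : st3NoViol R
    · exact ⟨R, hshape, hv, le_rfl, fun t => le_rfl⟩
    · obtain ⟨R'', _, hlt, _⟩ := st3_step m n R hshape hv
      omega
  | succ N ih =>
    intro R hN hshape
    by_cases hv : st3NoViol R
    · exact ⟨R, hshape, hv, le_rfl, fun t => le_rfl⟩
    · obtain ⟨R'', hsh'', hlt, htl''⟩ := st3_step m n R hshape hv
      obtain ⟨R', h1, h2, h3, h4⟩ := ih R'' (by omega) hsh''
      exact ⟨R', h1, h2, by omega, fun t => le_trans (h4 t) (htl'' t)⟩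

/-! ### Sum conversions -/

lemma st3_filter_card (Y t : ℕ) (S : Multiset ℕ) (hS : ∀ x ∈ S, x ≤ Y) :
    Multiset.card (S.filter (fun a => t < a)) = ∑ x ∈ Finset.Ioc t Y, S.count x := by
  induction S using Multiset.induction with
  | empty => simp
  | cons a S ih =>
    have haY : a ≤ Y := hS a (Multiset.mem_cons_self a S)
    have hS' : ∀ x ∈ S, x ≤ Y := fun x hx => hS x (Multiset.mem_cons_of_mem hx)
    rw [Multiset.filter_cons, Multiset.card_add, ih hS']
    simp only [Multiset.count_cons]
    rw [Finset.sum_add_distrib]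
    have he : (∑ x ∈ Finset.Ioc t Y, if x = a then 1 else 0) = if t < a then 1 else 0 := by
      rw [Finset.sum_ite_eq' (Finset.Ioc t Y) a (fun _ => 1)]
      by_cases h : t < a
      · rw [if_pos (Finset.mem_Ioc.mpr ⟨h, haY⟩), if_pos h]
      · rw [if_neg (fun hc => h (Finset.mem_Ioc.mp hc).1), if_neg h]
    rw [he]
    by_cases h : t < a <;> simp [h] <;> omega

lemma st3_sum_count (Y : ℕ) (S : Multiset ℕ) (hS : ∀ x ∈ S, x ≤ Y) :
    S.sum = ∑ x ∈ Finset.range (Y+1), x * S.count x := by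
  induction S using Multiset.induction with
  | empty => simp
  | cons a S ih =>
    have haY : a ≤ Y := hS a (Multiset.mem_cons_self a S)
    have hS' : ∀ x ∈ S, x ≤ Y := fun x hx => hS x (Multiset.mem_cons_of_mem hx)
    rw [Multiset.sum_cons, ih hS']
    simp only [Multiset.count_cons]
    have : ∀ x, x * (S.count x + if x = a then 1 else 0)
        = x * S.count x + (if x = a then x else 0) := by
      intro x
      by_cases h : x = a <;> simp [h] <;> ring
    rw [Finset.sum_congr rfl (fun x _ => this x), Finset.sum_add_distrib]
    rw [Finset.sum_ite_eq' (Finset.range (Y+1)) a (fun x => x)]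
    rw [if_pos (Finset.mem_range.mpr (by omega))]
    omega

lemma st3_tl_eq {k : ℕ} (R : Fin k → Finset (Multiset ℕ)) (Y : ℕ)
    (hY : ∀ j, ∀ S ∈ R j, ∀ x ∈ S, x ≤ Y) (t : ℕ) :
    st3tl t R = ∑ x ∈ Finset.Ioc t Y, msetTupMult R x := by
  unfold st3tl msetTupMult msetMult
  rw [Finset.sum_comm]
  apply Finset.sum_congr rfl
  intro j _
  rw [Finset.sum_comm]
  apply Finset.sum_congr rfl
  intro S hS
  exact st3_filter_card Y t S (hY j S hS)

lemma st3_totM_eq {k : ℕ} (R : Fin k → Finset (Multiset ℕ)) (Y : ℕ)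
    (hY : ∀ j, ∀ S ∈ R j, ∀ x ∈ S, x ≤ Y) :
    st3totM R = ∑ x ∈ Finset.range (Y+1), x * msetTupMult R x := by
  unfold st3totM msetTupMult msetMult
  simp only [Finset.mul_sum]
  rw [Finset.sum_comm]
  apply Finset.sum_congr rfl
  intro j _
  rw [Finset.sum_comm]
  apply Finset.sum_congr rfl
  intro S hS
  exact st3_sum_count Y S (hY j S hS)

lemma st3_bound {k : ℕ} (R : Fin k → Finset (Multiset ℕ)) :
    ∃ Y, ∀ j, ∀ S ∈ R j, ∀ x ∈ S, x ≤ Y := by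
  refine ⟨st3totM R, ?_⟩
  intro j S hS x hx
  have h1 : x ≤ S.sum := Multiset.single_le_sum (fun y _ => Nat.zero_le y) x hx
  have h2 : S.sum ≤ ∑ T ∈ R j, T.sum :=
    Finset.single_le_sum (fun T _ => Nat.zero_le _) hS
  have h3 : (∑ T ∈ R j, T.sum) ≤ st3totM R :=
    Finset.single_le_sum (f := fun i => ∑ T ∈ R i, T.sum)
      (fun i _ => Nat.zero_le _) (Finset.mem_univ j)
  omega

lemma st3_mult_zero {k : ℕ} {m : ℕ} {n : Fin k → ℕ} (R : Fin k → Finset (Multiset ℕ))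
    (hshape : ∀ j, IsMsetFamily m (n j) (R j)) : msetTupMult R 0 = 0 := by
  unfold msetTupMult msetMult
  apply Finset.sum_eq_zero
  intro j _
  apply Finset.sum_eq_zero
  intro S hS
  exact Multiset.count_eq_zero.mpr (fun hc => by
    have := ((hshape j).2 S hS).2 0 hc
    omega)

lemma st3_mult_bound {k : ℕ} (R : Fin k → Finset (Multiset ℕ)) (Y : ℕ)
    (hY : ∀ j, ∀ S ∈ R j, ∀ x ∈ S, x ≤ Y) :
    ∀ x, msetTupMult R x ≠ 0 → x ≤ Y := by
  intro x
  contrapose!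
  intro hx
  unfold msetTupMult msetMult
  apply Finset.sum_eq_zero
  intro j _
  apply Finset.sum_eq_zero
  intro S hS
  exact Multiset.count_eq_zero.mpr (fun hc => by
    have := hY j S hS x hc
    omega)

/-! ### partSum comparison -/

lemma st3_partSum_eq (f : ℕ → ℕ) (Y j : ℕ) (hf : ∀ x, f x ≠ 0 → x ≤ Y) :
    partSum f j = ∑ x ∈ Finset.range (Y+1), min (f x) j := by
  unfold partSum
  apply finsum_eq_finset_sum_of_support_subset
  intro x hx
  simp only [Function.mem_support] at hx
  have hfx : f x ≠ 0 := by
    intro h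
    apply hx
    rw [h]
    simp
  have := hf x hfx
  simp only [Finset.coe_range, Set.mem_Iio]
  omega

lemma st3_partSum_le (f g : ℕ → ℕ) (Y : ℕ)
    (hfY : ∀ x, f x ≠ 0 → x ≤ Y) (hgY : ∀ x, g x ≠ 0 → x ≤ Y)
    (hf0 : f 0 = 0) (hg0 : g 0 = 0) (hfdec : TypeDefined f)
    (htail : ∀ t, (∑ x ∈ Finset.Ioc t Y, g x) ≤ ∑ x ∈ Finset.Ioc t Y, f x) :
    ConjDom g f := by
  intro j
  rcases Nat.eq_zero_or_pos j with hj | hj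
  · subst hj
    rw [st3_partSum_eq f Y 0 hfY, st3_partSum_eq g Y 0 hgY]
    simp
  classical
  obtain ⟨y₀, hy₀Y, hbig, hsmall⟩ : ∃ y₀, y₀ ≤ Y ∧ (∀ x, 1 ≤ x → x ≤ y₀ → j ≤ f x)
      ∧ (∀ x, y₀ < x → f x < j) := by
    by_cases hne : ((Finset.range (Y+1)).filter (fun y => 1 ≤ y ∧ j ≤ f y)).Nonempty
    · refine ⟨((Finset.range (Y+1)).filter (fun y => 1 ≤ y ∧ j ≤ f y)).max' hne, ?_, ?_, ?_⟩
      · have hm := Finset.max'_mem _ hne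
        rw [Finset.mem_filter, Finset.mem_range] at hm
        omega
      · intro x h1 h2
        have hm := Finset.max'_mem _ hne
        rw [Finset.mem_filter, Finset.mem_range] at hm
        exact le_trans hm.2.2 (hfdec x _ h1 h2)
      · intro x hx
        by_cases hxY : x ≤ Y
        · by_contra hc
          push_neg at hc
          have hxs : x ∈ (Finset.range (Y+1)).filter (fun y => 1 ≤ y ∧ j ≤ f y) :=
            Finset.mem_filter.mpr ⟨Finset.mem_range.mpr (by omega), by omega, hc⟩
          have := Finset.le_max' _ x hxs
          omega
        · have hzero : f x = 0 := by
            by_contra hne2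
            exact absurd (hfY x hne2) (by omega)
          omega
    · refine ⟨0, Nat.zero_le _, ?_, ?_⟩
      · intro x h1 h2
        omega
      · intro x hx
        by_cases hxY : x ≤ Y
        · by_contra hc
          push_neg at hc
          apply hne
          exact ⟨x, Finset.mem_filter.mpr ⟨Finset.mem_range.mpr (by omega), by omega, hc⟩⟩
        · have hzero : f x = 0 := by
            by_contra hne2
            exact absurd (hfY x hne2) (by omega)
          omega
  have hsplit : ∀ h : ℕ → ℕ, (∑ x ∈ Finset.range (Y+1), min (h x) j)
      = (∑ x ∈ Finset.range (y₀+1), min (h x) j) + ∑ x ∈ Finset.Ioc y₀ Y, min (h x) j := by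
    intro h
    have e1 : Finset.range (Y+1) = Finset.range (y₀+1) ∪ Finset.Ioc y₀ Y := by
      ext a
      simp only [Finset.mem_range, Finset.mem_union, Finset.mem_Ioc]
      omega
    rw [e1, Finset.sum_union]
    rw [Finset.disjoint_left]
    intro a ha hb
    simp only [Finset.mem_range] at ha
    simp only [Finset.mem_Ioc] at hb
    omega
  rw [st3_partSum_eq g Y j hgY, st3_partSum_eq f Y j hfY, hsplit g, hsplit f]
  have hg1 : (∑ x ∈ Finset.range (y₀+1), min (g x) j) ≤ y₀ * j := by
    calc (∑ x ∈ Finset.range (y₀+1), min (g x) j)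
        ≤ ∑ x ∈ Finset.range (y₀+1), (if x = 0 then 0 else j) := by
          apply Finset.sum_le_sum
          intro x _
          by_cases h : x = 0
          · subst h
            simp [hg0]
          · rw [if_neg h]
            exact min_le_right _ _
      _ = y₀ * j := by
          rw [Finset.sum_range_succ']
          simp
  have hf1 : (∑ x ∈ Finset.range (y₀+1), min (f x) j) = y₀ * j := by
    calc (∑ x ∈ Finset.range (y₀+1), min (f x) j)
        = ∑ x ∈ Finset.range (y₀+1), (if x = 0 then 0 else j) := by
          apply Finset.sum_congr rfl
          intro x hx
          by_cases h : x = 0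
          · subst h
            simp [hf0]
          · rw [if_neg h]
            have hx' : x ≤ y₀ := by
              simp only [Finset.mem_range] at hx
              omega
            exact min_eq_right (hbig x (by omega) hx')
      _ = y₀ * j := by
          rw [Finset.sum_range_succ']
          simp
  have hg2 : (∑ x ∈ Finset.Ioc y₀ Y, min (g x) j) ≤ ∑ x ∈ Finset.Ioc y₀ Y, g x :=
    Finset.sum_le_sum (fun x _ => min_le_left _ _)
  have hf2 : (∑ x ∈ Finset.Ioc y₀ Y, min (f x) j) = ∑ x ∈ Finset.Ioc y₀ Y, f x := by
    apply Finset.sum_congr rfl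
    intro x hx
    have hx' : y₀ < x := (Finset.mem_Ioc.mp hx).1
    exact min_eq_left (le_of_lt (hsmall x hx'))
  have ht := htail y₀
  linarith


/-- Every minimal multiset family tuple is closed. -/
theorem stmt_3 (m k : ℕ) (n : Fin k → ℕ) (Q : Fin k → Finset (Multiset ℕ))
    (hQ : ∀ j, IsMsetFamily m (n j) (Q j))
    (htype : TypeDefined (msetTupMult Q))
    (hmin : ¬ ∃ R : Fin k → Finset (Multiset ℕ),
      (∀ j, IsMsetFamily m (n j) (R j)) ∧ TypeDefined (msetTupMult R) ∧
        ConjStrictDom (msetTupMult R) (msetTupMult Q)) :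
    ∀ j, ClosedMsetFam m (Q j) := by
  classical
  by_contra hcon
  push_neg at hcon
  obtain ⟨j₀, hj₀⟩ := hcon
  apply hmin
  have hNV : ¬ st3NoViol Q := by
    intro h
    exact hj₀ (st3_closed m (Q j₀) (fun S hS => (hQ j₀).2 S hS) (h j₀))
  obtain ⟨R₁, hsh₁, hlt₁, htl₁⟩ := st3_step m n Q hQ hNV
  obtain ⟨R, hshR, hNVR, htotR, htlR⟩ := st3_compress m n (st3totM R₁) R₁ le_rfl hsh₁
  have htails : ∀ t, st3tl t R ≤ st3tl t Q := fun t => le_trans (htlR t) (htl₁ t)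
  have htot : st3totM R < st3totM Q := by omega
  refine ⟨R, hshR, ?_, ?_, ?_⟩
  · -- TypeDefined
    have hadj : ∀ x, 1 ≤ x → msetTupMult R (x+1) ≤ msetTupMult R x := by
      intro x hx
      unfold msetTupMult
      apply Finset.sum_le_sum
      intro j _
      exact st3_mult_anti (R j) (hNVR j) x hx
    intro i j hi hij
    have key : ∀ d, msetTupMult R (i + d) ≤ msetTupMult R i := by
      intro d
      induction d with
      | zero => exact le_rfl
      | succ d ihd => exact le_trans (hadj (i + d) (by omega)) ihd
    have := key (j - i)
    rwa [show i + (j - i) = j from by omega] at this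
  · -- ConjDom
    obtain ⟨Y₁, hY₁⟩ := st3_bound Q
    obtain ⟨Y₂, hY₂⟩ := st3_bound R
    have hYQ : ∀ j, ∀ S ∈ Q j, ∀ x ∈ S, x ≤ max Y₁ Y₂ :=
      fun j S hS x hx => le_trans (hY₁ j S hS x hx) (le_max_left _ _)
    have hYR : ∀ j, ∀ S ∈ R j, ∀ x ∈ S, x ≤ max Y₁ Y₂ :=
      fun j S hS x hx => le_trans (hY₂ j S hS x hx) (le_max_right _ _)
    apply st3_partSum_le (msetTupMult Q) (msetTupMult R) (max Y₁ Y₂)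
      (st3_mult_bound Q _ hYQ) (st3_mult_bound R _ hYR)
      (st3_mult_zero Q hQ) (st3_mult_zero R hshR) htype
    intro t
    rw [← st3_tl_eq R _ hYR t, ← st3_tl_eq Q _ hYQ t]
    exact htails t
  · -- strictness
    by_contra hc
    push_neg at hc
    obtain ⟨Y₁, hY₁⟩ := st3_bound Q
    obtain ⟨Y₂, hY₂⟩ := st3_bound R
    have hYQ : ∀ j, ∀ S ∈ Q j, ∀ x ∈ S, x ≤ max Y₁ Y₂ :=
      fun j S hS x hx => le_trans (hY₁ j S hS x hx) (le_max_left _ _)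
    have hYR : ∀ j, ∀ S ∈ R j, ∀ x ∈ S, x ≤ max Y₁ Y₂ :=
      fun j S hS x hx => le_trans (hY₂ j S hS x hx) (le_max_right _ _)
    have heq : ∀ x ∈ Finset.range (max Y₁ Y₂ + 1),
        x * msetTupMult R x = x * msetTupMult Q x := by
      intro x _
      rcases Nat.eq_zero_or_pos x with h | h
      · subst h
        simp
      · rw [hc x h]
    have e1 := st3_totM_eq R _ hYR
    have e2 := st3_totM_eq Q _ hYQ
    have : st3totM R = st3totM Q := by
      rw [e1, e2]
      exact Finset.sum_congr rfl heq
    omega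
end

section
/- If (P_1,…,P_k) is a closed set family tuple then its type is defined; that is, the function i ↦ (total number of sets among P_1,…,P_k containing i) is weakly decreasing in i. -/
lemma sorted_getElem_le {l : List ℕ} (hs : l.Pairwise (· ≤ ·)) {i j : ℕ}
    (hij : i ≤ j) (hj : j < l.length) : l[i]'(lt_of_le_of_lt hij hj) ≤ l[j] :=
  hs.rel_get_of_le (a := ⟨i, lt_of_le_of_lt hij hj⟩) (b := ⟨j, hj⟩) hij

lemma card_filter_eq_sort (A : Finset ℕ) (t : ℕ) :
    (A.filter (fun x => t ≤ x)).card = ((A.sort (· ≤ ·)).filter (fun x => t ≤ x)).length := by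
  classical
  have h1 : (A.filter (fun x => t ≤ x)).val = A.val.filter (fun x => t ≤ x) :=
    Finset.filter_val _ _
  have h2 : (A.val : Multiset ℕ) = ↑(A.sort (· ≤ ·)) := (Finset.sort_eq _ _).symm
  calc (A.filter (fun x => t ≤ x)).card
      = Multiset.card ((A.filter (fun x => t ≤ x)).val) := rfl
    _ = Multiset.card (A.val.filter (fun x => t ≤ x)) := by rw [h1]
    _ = _ := by rw [h2, Multiset.filter_coe, Multiset.coe_card]

lemma setMaj_of_counts {A B : Finset ℕ} (hcard : A.card = B.card)
    (h : ∀ t, (A.filter (fun x => t ≤ x)).card ≤ (B.filter (fun x => t ≤ x)).card) :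
    SetMaj A B := by
  classical
  intro r
  set lA := A.sort (· ≤ ·) with hlA
  set lB := B.sort (· ≤ ·) with hlB
  have hlen : lA.length = lB.length := by
    rw [hlA, hlB, Finset.length_sort, Finset.length_sort, hcard]
  by_cases hr : r < lA.length
  · have hrB : r < lB.length := hlen ▸ hr
    rw [List.getD_eq_getElem _ _ hr, List.getD_eq_getElem _ _ hrB]
    by_contra hlt
    push_neg at hlt
    set t := lA[r] with ht
    -- lower bound: count in A ≥ len - r
    have hAlow : lA.length - r ≤ (lA.filter (fun x => t ≤ x)).length := by
      have hdrop : (lA.drop r).filter (fun x => t ≤ x) = lA.drop r := by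
        rw [List.filter_eq_self]
        intro x hx
        obtain ⟨i, hi, rfl⟩ := List.getElem_of_mem hx
        have hd : (lA.drop r).length = lA.length - r := List.length_drop
        rw [List.getElem_drop]
        simp only [decide_eq_true_eq]
        have hlt : r + i < lA.length := by rw [List.length_drop] at hi; omega
        exact sorted_getElem_le (Finset.pairwise_sort A _) (Nat.le_add_right r i) hlt
      calc lA.length - r = (lA.drop r).length := List.length_drop.symm
        _ = ((lA.drop r).filter (fun x => t ≤ x)).length := by rw [hdrop]
        _ ≤ (lA.filter (fun x => t ≤ x)).length :=
            ((lA.drop_sublist r).filter _).length_le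
    -- upper bound: count in B ≤ len - (r+1)
    have hBhigh : (lB.filter (fun x => t ≤ x)).length ≤ lB.length - (r + 1) := by
      have hsplit : lB = lB.take (r+1) ++ lB.drop (r+1) := (List.take_append_drop _ _).symm
      have htake : (lB.take (r+1)).filter (fun x => t ≤ x) = [] := by
        rw [List.filter_eq_nil_iff]
        intro x hx
        obtain ⟨i, hi, rfl⟩ := List.getElem_of_mem hx
        rw [List.getElem_take]
        simp only [decide_eq_true_eq, not_le]
        have hi' : i < r + 1 := by
          have := hi; simp only [List.length_take] at this; omega
        calc lB[i]'(by omega) ≤ lB[r] := sorted_getElem_le (Finset.pairwise_sort B _)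
              (by omega) hrB
          _ < t := hlt
      calc (lB.filter (fun x => t ≤ x)).length
          = ((lB.take (r+1) ++ lB.drop (r+1)).filter (fun x => t ≤ x)).length := by
            rw [← hsplit]
        _ = ((lB.drop (r+1)).filter (fun x => t ≤ x)).length := by
            rw [List.filter_append, htake, List.nil_append]
        _ ≤ (lB.drop (r+1)).length := List.filter_sublist.length_le
        _ = lB.length - (r+1) := List.length_drop
    have hc := h t
    rw [card_filter_eq_sort, card_filter_eq_sort, ← hlA, ← hlB] at hc
    omega
  · have h0 : lA.getD r 0 = 0 := List.getD_eq_default _ _ (le_of_not_gt hr)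
    rw [h0]; exact Nat.zero_le _

/-- The key step: for a closed family, multiplicity is weakly decreasing. -/
lemma famMult_anti {m : ℕ} {P : Finset (Finset ℕ)}
    (hP : ∀ S ∈ P, S.card = m ∧ ∀ x ∈ S, 1 ≤ x) (hclosed : ClosedFam m P)
    {i j : ℕ} (hi : 1 ≤ i) (hij : i ≤ j) : famMult P j ≤ famMult P i := by
  classical
  unfold famMult
  apply Finset.card_le_card_of_injOn (fun S => if i ∈ S then S else insert i (S.erase j))
  · intro S hS
    simp only [Finset.mem_coe, Finset.mem_filter] at hS ⊢
    obtain ⟨hSP, hjS⟩ := hS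
    by_cases hiS : i ∈ S
    · simp [hiS, hSP]
    · simp only [if_neg hiS]
      have hinej : i ≠ j := fun h => hiS (h ▸ hjS)
      have hij' : i < j := lt_of_le_of_ne hij hinej
      obtain ⟨hScard, hSpos⟩ := hP S hSP
      set A := insert i (S.erase j) with hA
      have hiA : i ∉ S.erase j := fun h => hiS (Finset.mem_of_mem_erase h)
      have hAcard : A.card = m := by
        rw [hA, Finset.card_insert_of_notMem hiA, Finset.card_erase_of_mem hjS, hScard]
        have : 1 ≤ m := by
          rw [← hScard]; exact Finset.card_pos.2 ⟨j, hjS⟩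
        omega
      have hApos : ∀ x ∈ A, 1 ≤ x := by
        intro x hx
        rcases Finset.mem_insert.1 hx with rfl | hx
        · exact hi
        · exact hSpos x (Finset.mem_of_mem_erase hx)
      refine ⟨hclosed S hSP A hAcard hApos ?_, Finset.mem_insert_self _ _⟩
      apply setMaj_of_counts (by rw [hAcard, hScard])
      intro t
      apply Finset.card_le_card_of_injOn (fun x => if x = i then j else x)
      · intro x hx
        simp only [Finset.mem_coe, Finset.mem_filter] at hx ⊢
        obtain ⟨hxA, htx⟩ := hx
        by_cases hxi : x = i
        · rw [if_pos hxi]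
          exact ⟨hjS, le_trans htx (hxi ▸ le_of_lt hij')⟩
        · rw [if_neg hxi]
          rcases Finset.mem_insert.1 hxA with rfl | hx'
          · exact absurd rfl hxi
          · exact ⟨Finset.mem_of_mem_erase hx', htx⟩
      · intro x hx y hy hxy
        simp only [Finset.mem_coe, Finset.mem_filter] at hx hy
        dsimp only at hxy
        by_cases hxi : x = i <;> by_cases hyi : y = i
        · rw [hxi, hyi]
        · -- x = i, y ≠ i : j = y, but y ∈ A means y ∈ erase j, contradiction
          exfalso
          simp only [if_pos hxi, if_neg hyi] at hxy
          rcases Finset.mem_insert.1 hy.1 with rfl | hy'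
          · exact hyi rfl
          · exact (Finset.ne_of_mem_erase hy') hxy.symm
        · exfalso
          simp only [if_neg hxi, if_pos hyi] at hxy
          rcases Finset.mem_insert.1 hx.1 with rfl | hx'
          · exact hxi rfl
          · exact (Finset.ne_of_mem_erase hx') hxy
        · rwa [if_neg hxi, if_neg hyi] at hxy
  · -- injectivity of S ↦ if i ∈ S then S else insert i (S.erase j)
    intro S hS T hT hST
    simp only [Finset.coe_filter, Set.mem_setOf_eq] at hS hT
    dsimp only at hST
    obtain ⟨hSP, hjS⟩ := hS
    obtain ⟨hTP, hjT⟩ := hT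
    by_cases hiS : i ∈ S <;> by_cases hiT : i ∈ T
    · simpa [hiS, hiT] using hST
    · exfalso
      have hinej : i ≠ j := fun h => hiT (h ▸ hjT)
      simp only [if_pos hiS, if_neg hiT] at hST
      have : j ∈ insert i (T.erase j) := hST ▸ hjS
      rcases Finset.mem_insert.1 this with h | h
      · exact hinej h.symm
      · exact (Finset.notMem_erase j T) h
    · exfalso
      have hinej : i ≠ j := fun h => hiS (h ▸ hjS)
      simp only [if_neg hiS, if_pos hiT] at hST
      have : j ∈ insert i (S.erase j) := hST.symm ▸ hjT
      rcases Finset.mem_insert.1 this with h | h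
      · exact hinej h.symm
      · exact (Finset.notMem_erase j S) h
    · simp only [if_neg hiS, if_neg hiT] at hST
      have hinej : i ≠ j := fun h => hiS (h ▸ hjS)
      have key : ∀ x, x ∈ S ↔ x ∈ T := by
        intro x
        by_cases hxj : x = j
        · subst hxj; simp [hjS, hjT]
        · by_cases hxi : x = i
          · subst hxi; simp [hiS, hiT]
          · have := Finset.ext_iff.1 hST x
            simp [Finset.mem_insert, Finset.mem_erase, hxi, hxj] at this
            exact this
      exact Finset.ext key


/-- The type of a closed set family tuple is always defined: the total
multiplicity function is weakly decreasing on the positive integers. -/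
theorem stmt_4 (m k : ℕ) (n : Fin k → ℕ) (P : Fin k → Finset (Finset ℕ))
    (hP : ∀ j, IsSetFamily m (n j) (P j))
    (hclosed : ∀ j, ClosedFam m (P j)) :
    TypeDefined (tupMult P) := by
  intro i j hi hij
  unfold tupMult
  exact Finset.sum_le_sum fun l _ =>
    famMult_anti (hP l).2 (hclosed l) hi hij
end

section
/- If (Q_1,…,Q_k) is a closed multiset family tuple then its type is defined; that is, the function i ↦ (total number of occurrences of i, counted with multiplicity, among all the multisets of Q_1,…,Q_k) is weakly decreasing in i. -/
lemma countP_replicate' (p : ℕ → Prop) [DecidablePred p] (d x : ℕ) :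
    Multiset.countP p (Multiset.replicate d x) = if p x then d else 0 := by
  induction d with
  | zero => simp
  | succ d ih =>
    rw [Multiset.replicate_succ, Multiset.countP_cons, ih]
    split <;> simp

-- countP of sorted list bounds
lemma countP_lt_le_of_sorted (l : List ℕ) (hl : l.Pairwise (· ≤ ·)) (r : ℕ) (hr : r < l.length)
    (t : ℕ) (ht : t ≤ l[r]) : l.countP (fun y => decide (y < t)) ≤ r := by
  conv_lhs => rw [← List.take_append_drop r l]
  rw [List.countP_append]
  have h1 : (List.take r l).countP (fun y => decide (y < t)) ≤ r := by
    calc _ ≤ (List.take r l).length := List.countP_le_length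
    _ ≤ r := by simp
  have h2 : (List.drop r l).countP (fun y => decide (y < t)) = 0 := by
    rw [List.countP_eq_zero]
    intro a ha
    rw [List.mem_iff_getElem] at ha
    obtain ⟨q, hq, rfl⟩ := ha
    have hq2 : r + q < l.length := by simp at hq; omega
    rw [List.getElem_drop (h := by simpa using hq)]
    have : l[r] ≤ l[r + q] := by
      have := hl.rel_get_of_le (a := ⟨r, hr⟩) (b := ⟨r + q, hq2⟩) (by simp)
      simpa using this
    simp only [decide_eq_true_eq]
    omega
  omega

lemma lt_countP_of_sorted (l : List ℕ) (hl : l.Pairwise (· ≤ ·)) (r : ℕ) (hr : r < l.length)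
    (t : ℕ) (ht : l[r] < t) : r + 1 ≤ l.countP (fun y => decide (y < t)) := by
  conv_rhs => rw [← List.take_append_drop (r+1) l]
  rw [List.countP_append]
  have h1 : (List.take (r+1) l).countP (fun y => decide (y < t)) = (List.take (r+1) l).length := by
    rw [List.countP_eq_length]
    intro a ha
    rw [List.mem_iff_getElem] at ha
    obtain ⟨q, hq, rfl⟩ := ha
    rw [List.getElem_take]
    have hq' : q < r + 1 := by simpa using (lt_of_lt_of_le hq (List.length_take_le _ _))
    have : l[q] ≤ l[r] := by
      have := hl.rel_get_of_le (a := ⟨q, by omega⟩) (b := ⟨r, hr⟩) (by simp; omega)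
      simpa using this
    simp only [decide_eq_true_eq]
    omega
  have h2 : (List.take (r+1) l).length = r + 1 := by
    rw [List.length_take]; omega
  omega

lemma maj_of_countP (A B : Multiset ℕ) (hcard : Multiset.card A = Multiset.card B)
    (h : ∀ t, B.countP (· < t) ≤ A.countP (· < t)) : MsetMaj A B := by
  intro r
  set lA := A.sort (· ≤ ·) with hlA
  set lB := B.sort (· ≤ ·) with hlB
  have hlenA : lA.length = Multiset.card A := Multiset.length_sort _
  have hlenB : lB.length = Multiset.card B := Multiset.length_sort _
  by_cases hr : r < lA.length
  · have hrB : r < lB.length := by omega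
    rw [List.getD_eq_getElem _ _ hr, List.getD_eq_getElem _ _ hrB]
    by_contra hcon
    push_neg at hcon
    set t := lA[r] with hta
    have h1 : r + 1 ≤ lB.countP (fun y => decide (y < t)) :=
      lt_countP_of_sorted lB (Multiset.pairwise_sort _ _) r hrB t hcon
    have h2 : lA.countP (fun y => decide (y < t)) ≤ r :=
      countP_lt_le_of_sorted lA (Multiset.pairwise_sort _ _) r hr t le_rfl
    have h3 : B.countP (· < t) ≤ A.countP (· < t) := h t
    rw [show A = (↑lA : Multiset ℕ) from (Multiset.sort_eq _ _).symm,
        show B = (↑lB : Multiset ℕ) from (Multiset.sort_eq _ _).symm] at h3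
    rw [Multiset.coe_countP, Multiset.coe_countP] at h3
    omega
  · rw [List.getD_eq_default _ _ (by omega)]
    exact Nat.zero_le _

open Multiset in
private lemma swap_step (m i j : ℕ) (Q : Finset (Multiset ℕ))
    (hfam : ∀ S ∈ Q, Multiset.card S = m ∧ ∀ x ∈ S, 1 ≤ x)
    (hcl : ClosedMsetFam m Q) (hi : 1 ≤ i) (hij : i < j)
    (S : Multiset ℕ) (hS : S ∈ Q) (hab : S.count i ≤ S.count j) :
    (S - replicate (S.count j - S.count i) j + replicate (S.count j - S.count i) i) ∈ Q ∧
    (S - replicate (S.count j - S.count i) j + replicate (S.count j - S.count i) i).count i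
      = S.count j ∧
    (S - replicate (S.count j - S.count i) j + replicate (S.count j - S.count i) i).count j
      = S.count i := by
  set a := S.count i with ha
  set b := S.count j with hb
  set d := b - a with hd
  set T := S - replicate d j + replicate d i with hT
  have hne : j ≠ i := by omega
  have hrep : replicate d j ≤ S := le_count_iff_replicate_le.mp (by omega)
  have hcnti : T.count i = b := by
    rw [hT, count_add, count_sub, count_replicate, count_replicate]
    simp [hne]
    omega
  have hcntj : T.count j = a := by
    rw [hT, count_add, count_sub, count_replicate, count_replicate]
    simp [hne, Ne.symm hne]
    omega
  have hcard : Multiset.card T = Multiset.card S := by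
    rw [hT, Multiset.card_add, Multiset.card_sub hrep, card_replicate, card_replicate]
    have : d ≤ Multiset.card S := le_trans (by simpa using Multiset.card_le_card hrep) le_rfl
    omega
  obtain ⟨hcardS, hposS⟩ := hfam S hS
  have hpos : ∀ x ∈ T, 1 ≤ x := by
    intro x hx
    rw [hT, Multiset.mem_add] at hx
    rcases hx with hx | hx
    · exact hposS x (Multiset.mem_of_le (Multiset.sub_le_self _ _) hx)
    · rcases eq_of_mem_replicate hx with rfl; exact hi
  have hmaj : MsetMaj T S := by
    apply maj_of_countP T S (by rw [hcard])
    intro t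
    have hsplit : S.countP (· < t) = (S - replicate d j).countP (· < t)
        + (replicate d j).countP (· < t) := by
      rw [← Multiset.countP_add, tsub_add_cancel_of_le hrep]
    have hTsplit : T.countP (· < t) = (S - replicate d j).countP (· < t)
        + (replicate d i).countP (· < t) := by
      rw [hT, Multiset.countP_add]
    rw [hsplit, hTsplit, countP_replicate', countP_replicate']
    split <;> split <;> omega
  exact ⟨hcl S hS T (by rw [hcard, hcardS]) hpos hmaj, hcnti, hcntj⟩

open Multiset in
private lemma family_mono (m i j : ℕ) (Q : Finset (Multiset ℕ))
    (hfam : ∀ S ∈ Q, Multiset.card S = m ∧ ∀ x ∈ S, 1 ≤ x)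
    (hcl : ClosedMsetFam m Q) (hi : 1 ≤ i) (hij : i < j) :
    msetMult Q j ≤ msetMult Q i := by
  classical
  unfold msetMult
  set σ : Multiset ℕ → Multiset ℕ :=
    fun S => S - replicate (S.count j - S.count i) j + replicate (S.count j - S.count i) i
    with hσ
  set A := Q.filter (fun S => S.count i < S.count j) with hA
  have hmem : ∀ S ∈ A, σ S ∈ Q ∧ (σ S).count i = S.count j ∧ (σ S).count j = S.count i := by
    intro S hS
    rw [hA, Finset.mem_filter] at hS
    exact swap_step m i j Q hfam hcl hi hij S hS.1 (le_of_lt hS.2)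
  have hinj : ∀ S₁ ∈ A, ∀ S₂ ∈ A, σ S₁ = σ S₂ → S₁ = S₂ := by
    have hrecover : ∀ S ∈ A, (σ S) - replicate ((σ S).count i - (σ S).count j) i
        + replicate ((σ S).count i - (σ S).count j) j = S := by
      intro S hS
      obtain ⟨_, h1, h2⟩ := hmem S hS
      rw [hA, Finset.mem_filter] at hS
      have hrep : replicate (S.count j - S.count i) j ≤ S :=
        le_count_iff_replicate_le.mp (by omega)
      rw [h1, h2, hσ]
      simp only
      rw [add_tsub_cancel_right, tsub_add_cancel_of_le hrep]
    intro S₁ h₁ S₂ h₂ he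
    rw [← hrecover S₁ h₁, ← hrecover S₂ h₂, he]
  -- sum manipulation
  have hsum1 : ∑ S ∈ Q, S.count j
      = (∑ S ∈ Q, min (S.count i) (S.count j)) + ∑ S ∈ Q, (S.count j - S.count i) := by
    rw [← Finset.sum_add_distrib]
    apply Finset.sum_congr rfl; intro S _; omega
  have hsum2 : ∑ S ∈ Q, S.count i
      = (∑ S ∈ Q, min (S.count i) (S.count j)) + ∑ S ∈ Q, (S.count i - S.count j) := by
    rw [← Finset.sum_add_distrib]
    apply Finset.sum_congr rfl; intro S _; omega
  rw [hsum1, hsum2]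
  have hfilter : ∑ S ∈ Q, (S.count j - S.count i) = ∑ S ∈ A, (S.count j - S.count i) := by
    rw [hA, Finset.sum_filter_of_ne]
    intro S _ hne; omega
  have hchain : ∑ S ∈ A, (S.count j - S.count i)
      ≤ ∑ T ∈ Q, (T.count i - T.count j) := by
    have e1 : ∑ S ∈ A, (S.count j - S.count i)
        = ∑ S ∈ A, ((σ S).count i - (σ S).count j) := by
      apply Finset.sum_congr rfl; intro S hS
      obtain ⟨_, h1, h2⟩ := hmem S hS
      rw [h1, h2]
    have e2 : ∑ S ∈ A, ((σ S).count i - (σ S).count j)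
        = ∑ T ∈ A.image σ, (T.count i - T.count j) :=
        (Finset.sum_image (f := fun T => T.count i - T.count j) hinj).symm
    have e3 : A.image σ ⊆ Q := by
      intro T hT
      rw [Finset.mem_image] at hT
      obtain ⟨S, hS, rfl⟩ := hT
      exact (hmem S hS).1
    rw [e1, e2]
    exact Finset.sum_le_sum_of_subset e3
  omega

/-- The type of a closed multiset family tuple is always defined: the total
multiplicity function is weakly decreasing on the positive integers. -/
theorem stmt_5 (m k : ℕ) (n : Fin k → ℕ) (Q : Fin k → Finset (Multiset ℕ))
    (hQ : ∀ j, IsMsetFamily m (n j) (Q j))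
    (hclosed : ∀ j, ClosedMsetFam m (Q j)) :
    TypeDefined (msetTupMult Q) := by
  intro i j hi hij
  rcases eq_or_lt_of_le hij with rfl | hlt
  · exact le_rfl
  unfold msetTupMult
  apply Finset.sum_le_sum
  intro t _
  exact family_mono m i j (Q t) (fun S hS => (hQ t).2 S hS) (hclosed t) hi hlt
end

section
/- Let P be a set family of shape (m^n), let B ∈ P and i ≥ 1 be such that i+1 ∈ B and i ∉ B, and suppose that the set A = (B \ {i+1}) ∪ {i} is not in P. Then P' = (P \ {B}) ∪ {A} is a set family of shape (m^n), and if both P and P' have defined types λ and μ respectively, then μ ⊲ λ. -/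
lemma famMult_insert (s : Finset (Finset ℕ)) (A : Finset ℕ) (hA : A ∉ s) (x : ℕ) :
    famMult (insert A s) x = famMult s x + (if x ∈ A then 1 else 0) := by
  unfold famMult
  rw [Finset.filter_insert]
  split_ifs with h
  · rw [Finset.card_insert_of_notMem (fun h => hA (Finset.mem_filter.mp h).1)]
  · simp

lemma famMult_support (P : Finset (Finset ℕ)) (x : ℕ) (h : famMult P x ≠ 0) :
    x ∈ P.biUnion id := by
  unfold famMult at h
  rw [Finset.card_ne_zero] at h
  obtain ⟨S, hS⟩ := h.exists_mem
  rw [Finset.mem_filter] at hS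
  exact Finset.mem_biUnion.mpr ⟨S, hS.1, hS.2⟩


/-- Replacing `B ∈ P` (with `i+1 ∈ B`, `i ∉ B`, `i ≥ 1`) by
`A = (B \ {i+1}) ∪ {i} ∉ P` yields a set family of the same shape whose type, when both
types are defined, is strictly dominated by that of `P`. -/
theorem stmt_6 (m n : ℕ) (P : Finset (Finset ℕ)) (hP : IsSetFamily m n P)
    (B : Finset ℕ) (hB : B ∈ P) (i : ℕ) (hi : 1 ≤ i)
    (hmem : i + 1 ∈ B) (hnotmem : i ∉ B)
    (hA : insert i (B.erase (i + 1)) ∉ P) :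
    IsSetFamily m n (insert (insert i (B.erase (i + 1))) (P.erase B)) ∧
    (TypeDefined (famMult P) →
      TypeDefined (famMult (insert (insert i (B.erase (i + 1))) (P.erase B))) →
      ConjStrictDom (famMult (insert (insert i (B.erase (i + 1))) (P.erase B))) (famMult P)) := by
  set A : Finset ℕ := insert i (B.erase (i + 1)) with hAdef
  set P' : Finset (Finset ℕ) := insert A (P.erase B) with hP'def
  have hAeB : A ∉ P.erase B := fun h => hA (Finset.mem_of_mem_erase h)
  have hBeB : B ∉ P.erase B := Finset.notMem_erase B P
  have hPins : P = insert B (P.erase B) := (Finset.insert_erase hB).symm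
  have hiA : i ∈ A := Finset.mem_insert_self _ _
  have hi1A : i + 1 ∉ A := by simp [hAdef]
  have hxAB : ∀ x, x ≠ i → x ≠ i + 1 → (x ∈ A ↔ x ∈ B) := by
    intro x h1 h2
    simp [hAdef, h1, h2]
  have hm : 0 < m := by
    rw [← (hP.2 B hB).1]; exact Finset.card_pos.mpr ⟨i + 1, hmem⟩
  have hn : 0 < n := by
    rw [← hP.1]; exact Finset.card_pos.mpr ⟨B, hB⟩
  have hfg : ∀ x, famMult P x = famMult (P.erase B) x + (if x ∈ B then 1 else 0) := by
    intro x
    conv_lhs => rw [hPins]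
    exact famMult_insert _ _ hBeB x
  have hg : ∀ x, famMult P' x = famMult (P.erase B) x + (if x ∈ A then 1 else 0) :=
    fun x => famMult_insert _ _ hAeB x
  have hgi : famMult P' i = famMult P i + 1 := by
    rw [hg, hfg]; simp [hiA, hnotmem]
  have hgi1 : famMult P' (i + 1) + 1 = famMult P (i + 1) := by
    rw [hg, hfg]; simp [hi1A, hmem]
  have hgx : ∀ x, x ≠ i → x ≠ i + 1 → famMult P' x = famMult P x := by
    intro x h1 h2
    rw [hg, hfg]
    simp [hxAB x h1 h2]
  refine ⟨⟨?_, ?_⟩, ?_⟩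
  · rw [Finset.card_insert_of_notMem hAeB, Finset.card_erase_of_mem hB, hP.1]
    omega
  · intro S hS
    rcases Finset.mem_insert.mp hS with rfl | hS
    · constructor
      · rw [hAdef, Finset.card_insert_of_notMem (fun h => hnotmem (Finset.mem_of_mem_erase h)),
          Finset.card_erase_of_mem hmem, (hP.2 B hB).1]
        omega
      · intro x hx
        rcases Finset.mem_insert.mp hx with rfl | hx
        · exact hi
        · exact (hP.2 B hB).2 x (Finset.mem_of_mem_erase hx)
    · exact hP.2 S (Finset.mem_of_mem_erase hS)
  · intro hf _
    have hff : famMult P (i + 1) ≤ famMult P i := hf i (i + 1) hi (Nat.le_succ i)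
    constructor
    · intro j
      unfold partSum
      set T : Finset ℕ := insert i (P.biUnion id) with hT
      have hsubT : P.biUnion id ⊆ T := Finset.subset_insert _ _
      have hiT : i ∈ T := Finset.mem_insert_self _ _
      have hi1T : i + 1 ∈ T := hsubT (Finset.mem_biUnion.mpr ⟨B, hB, hmem⟩)
      have hsupf : Function.support (fun x => min (famMult P x) j) ⊆ (T : Set ℕ) := by
        intro x hx
        have : famMult P x ≠ 0 := by
          simp only [Function.mem_support] at hx; omega
        exact hsubT (famMult_support P x this)
      have hsupg : Function.support (fun x => min (famMult P' x) j) ⊆ (T : Set ℕ) := by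
        intro x hx
        have hx0 : famMult P' x ≠ 0 := by
          simp only [Function.mem_support] at hx; omega
        have hx1 : x ∈ P'.biUnion id := famMult_support P' x hx0
        obtain ⟨S, hS1, hS2⟩ := Finset.mem_biUnion.mp hx1
        rcases Finset.mem_insert.mp hS1 with rfl | hS1
        · rcases Finset.mem_insert.mp hS2 with rfl | hS2
          · exact hiT
          · exact hsubT (Finset.mem_biUnion.mpr ⟨B, hB, Finset.mem_of_mem_erase hS2⟩)
        · exact hsubT (Finset.mem_biUnion.mpr ⟨S, Finset.mem_of_mem_erase hS1, hS2⟩)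
      rw [finsum_eq_sum_of_support_subset _ hsupf, finsum_eq_sum_of_support_subset _ hsupg]
      have hi1T' : i + 1 ∈ T.erase i := Finset.mem_erase.mpr ⟨by omega, hi1T⟩
      rw [← Finset.add_sum_erase T _ hiT, ← Finset.add_sum_erase (T.erase i) _ hi1T',
        ← Finset.add_sum_erase T (fun x => min (famMult P x) j) hiT,
        ← Finset.add_sum_erase (T.erase i) (fun x => min (famMult P x) j) hi1T']
      have hrest : ∑ x ∈ ((T.erase i).erase (i + 1)), min (famMult P' x) j
          = ∑ x ∈ ((T.erase i).erase (i + 1)), min (famMult P x) j := by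
        apply Finset.sum_congr rfl
        intro x hx
        rw [Finset.mem_erase, Finset.mem_erase] at hx
        rw [hgx x hx.2.1 hx.1]
      rw [hrest]
      omega
    · exact ⟨i, hi, by omega⟩
end

section
/- Let m ≥ 1, let 1 ≤ r ≤ m, and let p_1 > p_2 > … > p_r > 0 be integers with p_j ≥ m+1−j for each j. Set n = Σ_{j=1}^r C(p_j, m+1−j), and let P be the collection of all sets of the form X ∪ {p_{j−1}+1, p_{j−2}+1, …, p_1+1}, where 1 ≤ j ≤ r and X is an (m+1−j)-subset of {1,…,p_j}. Then P is a set family of shape (m^n), and for every x ≥ 1 the number of sets in P containing x equals Σ_{i : x ≤ p_i} C(p_i − 1, m − i) + Σ_{i : x = p_i + 1} a_i, where a_i = n − Σ_{j=1}^{i} C(p_j, m+1−j). -/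
/-- The tail `{p_{j-1}+1, …, p_1+1}` appended at level `j` (here `j : Fin r` is the
`(j+1)`-st level in the 1-indexed description). -/
def stmt7Tail (r : ℕ) (p : Fin r → ℕ) (j : Fin r) : Finset ℕ :=
  (Finset.univ.filter fun i : Fin r => i < j).image fun i => p i + 1

/-- The lexicographically least set family: all sets `X ∪ {p_{j-1}+1, …, p_1+1}` where `X`
is an `(m+1-j)`-subset of `{1, …, p_j}` (1-indexed `j`). -/
def stmt7Fam (m r : ℕ) (p : Fin r → ℕ) : Finset (Finset ℕ) :=
  Finset.univ.biUnion fun j : Fin r =>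
    (Finset.powersetCard (m - j.val) (Finset.Icc 1 (p j))).image fun X => X ∪ stmt7Tail r p j

/-- Number of `(k+1)`-subsets of `s` containing a fixed element `a`. -/
lemma count_mem_powersetCard (s : Finset ℕ) (k a : ℕ) (ha : a ∈ s) :
    ((Finset.powersetCard (k+1) s).filter (fun X => a ∈ X)).card
      = (s.card - 1).choose k := by
  have h : ((Finset.powersetCard (k+1) s).filter (fun X => a ∈ X)).card
      = (Finset.powersetCard k (s.erase a)).card := by
    apply Finset.card_bij (fun X _ => X.erase a)
    · rintro X hX
      simp only [Finset.mem_filter, Finset.mem_powersetCard] at hX ⊢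
      refine ⟨fun y hy => ?_, ?_⟩
      · rcases Finset.mem_erase.mp hy with ⟨h1, h2⟩
        exact Finset.mem_erase.mpr ⟨h1, hX.1.1 h2⟩
      · rw [Finset.card_erase_of_mem hX.2, hX.1.2]
        omega
    · rintro X hX Y hY h
      simp only [Finset.mem_filter] at hX hY
      have : insert a (X.erase a) = insert a (Y.erase a) := by rw [h]
      rwa [Finset.insert_erase hX.2, Finset.insert_erase hY.2] at this
    · rintro Y hY
      rw [Finset.mem_powersetCard] at hY
      have haY : a ∉ Y := fun h => (Finset.mem_erase.mp (hY.1 h)).1 rfl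
      refine ⟨insert a Y, ?_, ?_⟩
      · simp only [Finset.mem_filter, Finset.mem_powersetCard]
        refine ⟨⟨?_, ?_⟩, Finset.mem_insert_self a Y⟩
        · intro y hy
          rcases Finset.mem_insert.mp hy with rfl | hy
          · exact ha
          · exact Finset.erase_subset a s (hY.1 hy)
        · rw [Finset.card_insert_of_notMem haY, hY.2]
      · rw [Finset.erase_insert haY]
  rw [h, Finset.card_powersetCard, Finset.card_erase_of_mem ha]

/-- For `p_1 > ⋯ > p_r > 0` with `p_j ≥ m+1-j`, the family `stmt7Fam`
is a set family of shape `(m^n)` with `n = Σ_j C(p_j, m+1-j)`, and the number of its sets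
containing `x ≥ 1` is `Σ_{i : x ≤ p_i} C(p_i - 1, m - i) + Σ_{i : x = p_i + 1} a_i` where
`a_i = n - Σ_{j ≤ i} C(p_j, m+1-j)`.  (Indices of `p` are 1-indexed in the informal
statement; `j : Fin r` corresponds to the index `j+1`, so `m+1-(j+1) = m - j.val`.) -/
theorem stmt_7 (m r : ℕ) (hm : 1 ≤ m) (hr : 1 ≤ r) (hrm : r ≤ m)
    (p : Fin r → ℕ)
    (hdec : ∀ i j : Fin r, i < j → p j < p i)
    (hpos : ∀ j : Fin r, 0 < p j)
    (hbig : ∀ j : Fin r, m - j.val ≤ p j) :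
    IsSetFamily m (∑ j : Fin r, (p j).choose (m - j.val)) (stmt7Fam m r p) ∧
    ∀ x : ℕ, 1 ≤ x →
      famMult (stmt7Fam m r p) x =
        (∑ i ∈ Finset.univ.filter fun i : Fin r => x ≤ p i, (p i - 1).choose (m - 1 - i.val))
        + ∑ i ∈ Finset.univ.filter fun i : Fin r => x = p i + 1,
            ((∑ j : Fin r, (p j).choose (m - j.val))
              - ∑ j ∈ Finset.univ.filter fun j : Fin r => j ≤ i, (p j).choose (m - j.val)) := by
  set T : Fin r → Finset ℕ := stmt7Tail r p with hT
  set L : Fin r → Finset (Finset ℕ) := fun j =>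
    (Finset.powersetCard (m - j.val) (Finset.Icc 1 (p j))).image fun X => X ∪ T j with hL
  have hFam : stmt7Fam m r p = Finset.univ.biUnion L := rfl
  have hjm : ∀ j : Fin r, j.val < m := fun j => lt_of_lt_of_le j.isLt hrm
  have tail_mem : ∀ (j : Fin r) (y : ℕ), y ∈ T j ↔ ∃ i, i < j ∧ y = p i + 1 := by
    intro j y
    simp only [hT, stmt7Tail, Finset.mem_image, Finset.mem_filter, Finset.mem_univ, true_and]
    constructor
    · rintro ⟨i, h1, h2⟩; exact ⟨i, h1, h2.symm⟩
    · rintro ⟨i, h1, h2⟩; exact ⟨i, h1, h2.symm⟩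
  have tail_gt : ∀ (j : Fin r) (y : ℕ), y ∈ T j → p j < y := by
    intro j y hy
    rcases (tail_mem j y).mp hy with ⟨i, h1, rfl⟩
    exact lt_trans (hdec i j h1) (Nat.lt_succ_self _)
  have tail_card : ∀ j : Fin r, (T j).card = j.val := by
    intro j
    rw [hT]
    unfold stmt7Tail
    rw [Finset.card_image_of_injOn (fun a _ b _ h => ?_)]
    · have : (Finset.univ.filter fun i : Fin r => i < j) = Finset.Iio j := by
        ext i; simp [Finset.mem_Iio]
      rw [this, Fin.card_Iio]
    · have hpe : p a = p b := by omega
      by_contra hne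
      rcases lt_or_gt_of_ne hne with h1 | h1
      · exact absurd hpe (ne_of_gt (hdec a b h1))
      · exact absurd hpe (ne_of_lt (hdec b a h1))
  have hdisj : ∀ (j : Fin r) (X : Finset ℕ), X ⊆ Finset.Icc 1 (p j) → Disjoint X (T j) := by
    intro j X hX
    rw [Finset.disjoint_left]
    intro y hy hyT
    have h1 := (Finset.mem_Icc.mp (hX hy)).2
    exact absurd (tail_gt j y hyT) (by omega)
  have mem_L : ∀ (j : Fin r) (S : Finset ℕ), S ∈ L j →
      p j + 1 ∉ S ∧ (∀ i : Fin r, i < j → p i + 1 ∈ S) ∧ S.card = m ∧ ∀ x ∈ S, 1 ≤ x := by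
    intro j S hS
    simp only [hL, Finset.mem_image, Finset.mem_powersetCard] at hS
    rcases hS with ⟨X, ⟨hXs, hXc⟩, rfl⟩
    refine ⟨?_, ?_, ?_, ?_⟩
    · intro h
      rcases Finset.mem_union.mp h with h | h
      · have := (Finset.mem_Icc.mp (hXs h)).2; omega
      · rcases (tail_mem j _).mp h with ⟨i, h1, h2⟩
        have := hdec i j h1; omega
    · intro i hi
      exact Finset.mem_union_right _ ((tail_mem j _).mpr ⟨i, hi, rfl⟩)
    · rw [Finset.card_union_of_disjoint (hdisj j X hXs), hXc, tail_card j]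
      have := hjm j; omega
    · intro x hx
      rcases Finset.mem_union.mp hx with h | h
      · exact (Finset.mem_Icc.mp (hXs h)).1
      · have := tail_gt j x h; have := hpos j; omega
  have Ldisj : ∀ i j : Fin r, i ≠ j → Disjoint (L i) (L j) := by
    have key : ∀ i j : Fin r, i < j → Disjoint (L i) (L j) := by
      intro i j hij
      rw [Finset.disjoint_left]
      intro S hSi hSj
      exact (mem_L i S hSi).1 ((mem_L j S hSj).2.1 i hij)
    intro i j hij
    rcases lt_or_gt_of_ne hij with h | h
    · exact key i j h
    · exact (key j i h).symm
  have hinj : ∀ j : Fin r, Set.InjOn (fun X => X ∪ T j)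
      (Finset.powersetCard (m - j.val) (Finset.Icc 1 (p j)) : Set (Finset ℕ)) := by
    intro j X hX Y hY h
    simp only [Finset.mem_coe, Finset.mem_powersetCard] at hX hY
    have hX' : Disjoint X (T j) := hdisj j X hX.1
    have hY' : Disjoint Y (T j) := hdisj j Y hY.1
    have h2 : (X ∪ T j) \ T j = (Y ∪ T j) \ T j := by
      simp only at h; rw [h]
    rwa [Finset.union_sdiff_cancel_right hX', Finset.union_sdiff_cancel_right hY'] at h2
  have Lcard : ∀ j : Fin r, (L j).card = (p j).choose (m - j.val) := by
    intro j
    rw [hL]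
    rw [Finset.card_image_of_injOn (hinj j), Finset.card_powersetCard, Nat.card_Icc]
    simp
  constructor
  · constructor
    · rw [hFam, Finset.card_biUnion (fun i _ j _ hij => Ldisj i j hij)]
      exact Finset.sum_congr rfl fun j _ => Lcard j
    · intro S hS
      rw [hFam, Finset.mem_biUnion] at hS
      rcases hS with ⟨j, _, hS⟩
      exact ⟨(mem_L j S hS).2.2.1, (mem_L j S hS).2.2.2⟩
  · intro x hx
    have level_count : ∀ j : Fin r, ((L j).filter (fun S => x ∈ S)).card =
        if ∃ i, i < j ∧ x = p i + 1 then (p j).choose (m - j.val)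
        else if x ≤ p j then (p j - 1).choose (m - 1 - j.val) else 0 := by
      intro j
      rw [hL]
      simp only
      rw [Finset.filter_image]
      rw [Finset.card_image_of_injOn ((hinj j).mono (by
        intro X hX
        simp only [Finset.coe_filter, Set.mem_setOf_eq] at hX
        simpa using hX.1))]
      by_cases hQ : ∃ i, i < j ∧ x = p i + 1
      · rw [if_pos hQ]
        have hxT : x ∈ T j := (tail_mem j x).mpr hQ
        rw [Finset.filter_true_of_mem (fun X _ => Finset.mem_union_right X hxT)]
        rw [Finset.card_powersetCard, Nat.card_Icc]
        simp
      · rw [if_neg hQ]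
        have hxT : x ∉ T j := fun h => hQ ((tail_mem j x).mp h)
        by_cases hxp : x ≤ p j
        · rw [if_pos hxp]
          have hxI : x ∈ Finset.Icc 1 (p j) := Finset.mem_Icc.mpr ⟨hx, hxp⟩
          have hfe : ∀ X ∈ Finset.powersetCard (m - j.val) (Finset.Icc 1 (p j)),
              (x ∈ X ∪ T j) = (x ∈ X) := by
            intro X _
            simp only [Finset.mem_union, eq_iff_iff]
            exact ⟨fun h => h.resolve_right hxT, Or.inl⟩
          rw [Finset.filter_congr (fun X hX => by rw [hfe X hX])]
          have hmj : m - j.val = (m - 1 - j.val) + 1 := by have := hjm j; omega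
          rw [hmj, count_mem_powersetCard _ _ _ hxI, Nat.card_Icc]
          congr 1
        · rw [if_neg hxp]
          rw [Finset.card_eq_zero, Finset.filter_eq_empty_iff]
          intro X hX
          rw [Finset.mem_powersetCard] at hX
          intro hmem
          rcases Finset.mem_union.mp hmem with h | h
          · exact hxp (Finset.mem_Icc.mp (hX.1 h)).2
          · exact hxT h
    have hmul : famMult (stmt7Fam m r p) x = ∑ j : Fin r,
        (if ∃ i, i < j ∧ x = p i + 1 then (p j).choose (m - j.val)
        else if x ≤ p j then (p j - 1).choose (m - 1 - j.val) else 0) := by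
      unfold famMult
      rw [hFam, Finset.filter_biUnion, Finset.card_biUnion (fun i _ j _ hij =>
        Finset.disjoint_filter_filter (Ldisj i j hij))]
      exact Finset.sum_congr rfl fun j _ => level_count j
    rw [hmul]
    have hQ_imp : ∀ j : Fin r, (∃ i, i < j ∧ x = p i + 1) → ¬ x ≤ p j := by
      rintro j ⟨i, h1, rfl⟩ h
      have := hdec i j h1; omega
    rw [← Finset.sum_filter_add_sum_filter_not Finset.univ
      (fun j => ∃ i, i < j ∧ x = p i + 1)]
    rw [add_comm]
    congr 1
    · -- non-Q part equals the first sum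
      rw [Finset.sum_congr rfl (fun j hj => by
        rw [if_neg (Finset.mem_filter.mp hj).2])]
      rw [Finset.sum_ite, Finset.sum_const_zero, add_zero]
      apply Finset.sum_congr
      · rw [Finset.filter_filter]
        apply Finset.filter_congr
        intro j _
        constructor
        · rintro ⟨_, h⟩; exact h
        · intro h; exact ⟨fun hQ => hQ_imp j hQ h, h⟩
      · intros; rfl
    · -- Q part equals the a_i part
      rw [Finset.sum_congr rfl (fun j hj => by
        rw [if_pos (Finset.mem_filter.mp hj).2])]
      by_cases hex : ∃ i : Fin r, x = p i + 1
      · rcases hex with ⟨i0, hi0⟩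
        have huniq : ∀ i : Fin r, x = p i + 1 → i = i0 := by
          intro i hi
          have hpe : p i = p i0 := by omega
          by_contra hne
          rcases lt_or_gt_of_ne hne with h1 | h1
          · exact absurd hpe (ne_of_gt (hdec i i0 h1))
          · exact absurd hpe (ne_of_lt (hdec i0 i h1))
        have hfilt1 : (Finset.univ.filter fun i : Fin r => x = p i + 1) = {i0} := by
          ext i
          simp only [Finset.mem_filter, Finset.mem_univ, true_and, Finset.mem_singleton]
          exact ⟨fun h => huniq i h, fun h => h ▸ hi0⟩
        have hfilt2 : (Finset.univ.filter fun j : Fin r => ∃ i, i < j ∧ x = p i + 1)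
            = Finset.univ.filter fun j : Fin r => i0 < j := by
          apply Finset.filter_congr
          intro j _
          constructor
          · rintro ⟨i, h1, h2⟩; rwa [huniq i h2] at h1
          · intro h; exact ⟨i0, h, hi0⟩
        rw [hfilt1, hfilt2, Finset.sum_singleton]
        have hsplit : (∑ j : Fin r, (p j).choose (m - j.val)) =
            (∑ j ∈ Finset.univ.filter fun j : Fin r => j ≤ i0, (p j).choose (m - j.val))
            + ∑ j ∈ Finset.univ.filter fun j : Fin r => i0 < j, (p j).choose (m - j.val) := by
          rw [← Finset.sum_filter_add_sum_filter_not Finset.univ (fun j : Fin r => j ≤ i0)]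
          congr 1
          apply Finset.sum_congr
          · apply Finset.filter_congr
            intro j _
            simp [not_le]
          · intros; rfl
        omega
      · have h1 : (Finset.univ.filter fun j : Fin r => ∃ i, i < j ∧ x = p i + 1)
            = ∅ := by
          rw [Finset.filter_eq_empty_iff]
          rintro j _ ⟨i, _, hi⟩
          exact hex ⟨i, hi⟩
        have h2 : (Finset.univ.filter fun i : Fin r => x = p i + 1) = ∅ := by
          rw [Finset.filter_eq_empty_iff]
          intro i _ hi
          exact hex ⟨i, hi⟩
        rw [h1, h2, Finset.sum_empty, Finset.sum_empty]
end
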